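/- arXiv:1008.3689 — 5 statements merged into one kernel-verified Lean document; each statement's English description precedes it below -/
import Mathlib

section
/- Suppose given three ℤ-indexed families (A_n, α_n), (B_n, β_n), (C_n, γ_n) of finite-dimensional ℂ-vector spaces with endomorphisms, all vanishing for n sufficiently large, together with ℂ-linear maps u_n : A_n → B_n, v_n : B_n → C_n, δ_n : C_n → A_{n+1} forming a long exact sequence ⋯ → A_n → B_n → C_n → A_{n+1} → ⋯ and commuting with the endomorphisms (β_n∘u_n = u_n∘α_n, γ_n∘v_n = v_n∘β_n, α_{n+1}∘δ_n = δ_n∘γ_n). If any two of the three families (A,α), (B,β), (C,γ) are convergent, then so is the third, and the alternating sums of traces, which converge absolutely, satisfy ∑_{n∈ℤ}(−1)^n Tr(β_n, B_n) = ∑_{n∈ℤ}(−1)^n Tr(α_n, A_n) + ∑_{n∈ℤ}(−1)^n Tr(γ_n, C_n). -/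
open Filter

section Aux

open LinearMap Polynomial

variable {K : Type*} [Field K] {M N : Type*} [AddCommGroup M] [Module K M]
  [AddCommGroup N] [Module K N] [FiniteDimensional K M] [FiniteDimensional K N]

private lemma charpoly_prod_triangular (f : M × N →ₗ[K] M × N) (h : ∀ x : M, (f (x, 0)).2 = 0) :
    f.charpoly =
      ((LinearMap.fst K M N) ∘ₗ f ∘ₗ (LinearMap.inl K M N)).charpoly *
      ((LinearMap.snd K M N) ∘ₗ f ∘ₗ (LinearMap.inr K M N)).charpoly := by
  classical
  let b₁ := Module.finBasis K M
  let b₂ := Module.finBasis K N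
  rw [← LinearMap.charpoly_toMatrix f (b₁.prod b₂), ← LinearMap.charpoly_toMatrix _ b₁,
    ← LinearMap.charpoly_toMatrix _ b₂]
  set Mx := LinearMap.toMatrix (b₁.prod b₂) (b₁.prod b₂) f with hMx
  have h21 : Mx.toBlocks₂₁ = 0 := by
    ext i j
    simp only [Matrix.toBlocks₂₁, Matrix.of_apply, hMx, LinearMap.toMatrix_apply]
    have hb : (b₁.prod b₂) (Sum.inl j) = (b₁ j, 0) := by
      ext
      · exact Module.Basis.prod_apply_inl_fst b₁ b₂ j
      · exact Module.Basis.prod_apply_inl_snd b₁ b₂ j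
    rw [hb, Module.Basis.prod_repr_inr, h (b₁ j), map_zero]
    simp
  have hblocks : Mx = Matrix.fromBlocks Mx.toBlocks₁₁ Mx.toBlocks₁₂ 0 Mx.toBlocks₂₂ := by
    conv_lhs => rw [← Matrix.fromBlocks_toBlocks Mx]
    rw [h21]
  have h11 : Mx.toBlocks₁₁ =
      LinearMap.toMatrix b₁ b₁ ((LinearMap.fst K M N) ∘ₗ f ∘ₗ (LinearMap.inl K M N)) := by
    ext i j
    simp only [Matrix.toBlocks₁₁, Matrix.of_apply, hMx, LinearMap.toMatrix_apply]
    have : (b₁.prod b₂) (Sum.inl j) = (b₁ j, 0) := by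
      ext
      · exact Module.Basis.prod_apply_inl_fst b₁ b₂ j
      · exact Module.Basis.prod_apply_inl_snd b₁ b₂ j
    rw [this, Module.Basis.prod_repr_inl]
    simp
  have h22 : Mx.toBlocks₂₂ =
      LinearMap.toMatrix b₂ b₂ ((LinearMap.snd K M N) ∘ₗ f ∘ₗ (LinearMap.inr K M N)) := by
    ext i j
    simp only [Matrix.toBlocks₂₂, Matrix.of_apply, hMx, LinearMap.toMatrix_apply]
    have : (b₁.prod b₂) (Sum.inr j) = (0, b₂ j) := by
      ext
      · exact Module.Basis.prod_apply_inr_fst b₁ b₂ j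
      · exact Module.Basis.prod_apply_inr_snd b₁ b₂ j
    rw [this, Module.Basis.prod_repr_inr]
    simp
  calc Mx.charpoly
      = (Matrix.fromBlocks Mx.toBlocks₁₁ Mx.toBlocks₁₂ 0 Mx.toBlocks₂₂).charpoly := by
        rw [← hblocks]
    _ = Mx.toBlocks₁₁.charpoly * Mx.toBlocks₂₂.charpoly := Matrix.charpoly_fromBlocks_zero₂₁ _ _ _
    _ = _ := by rw [h11, h22]

variable {V : Type*} [AddCommGroup V] [Module K V] [FiniteDimensional K V]

private lemma charpoly_restrict_mul_mapQ (φ : V →ₗ[K] V) (p : Submodule K V)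
    (hp : ∀ x ∈ p, φ x ∈ p) :
    φ.charpoly = (φ.restrict hp).charpoly *
      (Submodule.mapQ p p φ (fun x hx => hp x hx)).charpoly := by
  obtain ⟨q, hq⟩ := Submodule.exists_isCompl p
  let e := Submodule.prodEquivOfIsCompl p q hq
  have hesymm : ∀ z : V, ∀ hz : z ∈ p, e.symm z = ((⟨z, hz⟩, 0) : ↥p × ↥q) := fun z hz =>
    Submodule.prodEquivOfIsCompl_symm_apply_left p q hq ⟨z, hz⟩
  set ψ := e.symm.conj φ with hψ
  have hψapp : ∀ x : ↥p × ↥q, ψ x = e.symm (φ (e x)) := by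
    intro x; simp [hψ, LinearEquiv.conj_apply, e]
  have htri : ∀ x : ↥p, (ψ (x, 0)).2 = 0 := by
    intro x
    have he : e (x, 0) = (x : V) := by
      simp [e, Submodule.coe_prodEquivOfIsCompl']
    rw [hψapp, he, hesymm _ (hp x x.2)]
  have hchar : φ.charpoly = ψ.charpoly := (LinearEquiv.charpoly_conj e.symm φ).symm
  rw [hchar, charpoly_prod_triangular ψ htri]
  congr 1
  · congr 1
    ext x
    have he : e (x, (0 : ↥q)) = (x : V) := by
      simp [e, Submodule.coe_prodEquivOfIsCompl']
    simp only [coe_comp, Function.comp_apply, inl_apply, fst_apply]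
    rw [hψapp, he, hesymm _ (hp x x.2)]
    rfl
  · let e' := Submodule.quotientEquivOfIsCompl p q hq
    have key : ∀ z : V, e' (Submodule.Quotient.mk z) = (e.symm z).2 := by
      intro z
      have hz : z = ((e.symm z).1 : V) + ((e.symm z).2 : V) := by
        conv_lhs => rw [← e.apply_symm_apply z]
        exact Submodule.coe_prodEquivOfIsCompl' p q hq _
      have : (Submodule.Quotient.mk z : V ⧸ p) = Submodule.Quotient.mk ((e.symm z).2 : V) := by
        rw [Submodule.Quotient.eq]
        nth_rewrite 1 [hz]
        simpa using ((e.symm z).1).2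
      rw [this]
      exact Submodule.quotientEquivOfIsCompl_apply_mk_coe hq _
    have : (LinearMap.snd K ↥p ↥q) ∘ₗ ψ ∘ₗ (LinearMap.inr K ↥p ↥q) =
        e'.conj (Submodule.mapQ p p φ (fun x hx => hp x hx)) := by
      refine LinearMap.ext fun y => ?_
      have he : e ((0 : ↥p), y) = (y : V) := by
        simp [e, Submodule.coe_prodEquivOfIsCompl']
      have lhs : ((LinearMap.snd K ↥p ↥q) ∘ₗ ψ ∘ₗ (LinearMap.inr K ↥p ↥q)) y
          = (e.symm (φ (y : V))).2 := by
        simp only [coe_comp, Function.comp_apply, inr_apply, snd_apply]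
        rw [hψapp, he]
      have rhs : (e'.conj (Submodule.mapQ p p φ (fun x hx => hp x hx))) y
          = (e.symm (φ (y : V))).2 := by
        rw [LinearEquiv.conj_apply]
        show e' ((Submodule.mapQ p p φ (fun x hx => hp x hx)) (e'.symm y)) = _
        have hsy : (Submodule.mapQ p p φ (fun x hx => hp x hx)) (e'.symm y)
            = Submodule.Quotient.mk (φ (y : V)) := rfl
        rw [hsy, key]
      rw [lhs, rhs]
    rw [this, LinearEquiv.charpoly_conj]

private lemma charpoly_eq_of_conj (e : M ≃ₗ[K] N) (f : M →ₗ[K] M) (g : N →ₗ[K] N)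
    (h : ∀ x, g (e x) = e (f x)) : g.charpoly = f.charpoly := by
  have hg : g = e.conj f := by
    refine LinearMap.ext fun y => ?_
    rw [LinearEquiv.conj_apply]
    show g y = e (f (e.symm y))
    rw [← h, e.apply_symm_apply]
  rw [hg, LinearEquiv.charpoly_conj]

private lemma trace_eq_sum_roots_cpx {V : Type*} [AddCommGroup V] [Module ℂ V]
    [FiniteDimensional ℂ V] (φ : V →ₗ[ℂ] V) :
    LinearMap.trace ℂ V φ = φ.charpoly.roots.sum := by
  classical
  let b := Module.finBasis ℂ V
  rw [LinearMap.trace_eq_matrix_trace ℂ b, ← LinearMap.charpoly_toMatrix φ b,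
    Matrix.trace_eq_sum_roots_charpoly]

/-- abbreviation for the weighted root sums -/
private noncomputable def msum (R : Multiset ℂ) (s : ℝ) : ℝ :=
  (R.map fun z => ‖z‖ ^ s).sum

private lemma msum_nonneg (R : Multiset ℂ) (s : ℝ) : 0 ≤ msum R s := by
  refine Multiset.sum_nonneg ?_
  intro x hx
  obtain ⟨z, _, rfl⟩ := Multiset.mem_map.mp hx
  exact Real.rpow_nonneg (norm_nonneg z) s

private lemma msum_add (R S : Multiset ℂ) (s : ℝ) :
    msum (R + S) s = msum R s + msum S s := by
  simp [msum]

private lemma norm_sum_le_msum_one (R : Multiset ℂ) : ‖R.sum‖ ≤ msum R 1 := by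
  refine le_trans (norm_multiset_sum_le R) (le_of_eq ?_)
  simp only [msum]
  congr 1
  apply Multiset.map_congr rfl
  intro z _
  rw [Real.rpow_one]

private lemma summable_split {f g : ℤ → ℝ} (hf : ∀ n, 0 ≤ f n) (hg : ∀ n, 0 ≤ g n)
    (h : Summable fun n => f n + g n) : Summable f ∧ Summable g := by
  constructor
  · exact h.of_nonneg_of_le hf (fun n => le_add_of_nonneg_right (hg n))
  · exact h.of_nonneg_of_le hg (fun n => le_add_of_nonneg_left (hf n))

private lemma summable_shift {E : Type*} [AddCommMonoid E] [TopologicalSpace E] (f : ℤ → E) :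
    Summable (fun n : ℤ => f (n + 1)) ↔ Summable f := by
  have h := (Equiv.addRight (1 : ℤ)).summable_iff (f := f)
  have : (f ∘ (Equiv.addRight (1 : ℤ))) = fun n : ℤ => f (n + 1) := rfl
  rwa [this] at h

/-- The combinatorial core: three families of root multisets related as in the long exact
sequence. -/
private theorem aux_main (RA RB RC Ra Rb Rc : ℤ → Multiset ℂ)
    (hA : ∀ n, RA n = Ra n + Rb n) (hB : ∀ n, RB n = Rb n + Rc n)
    (hC : ∀ n, RC n = Rc n + Ra (n + 1))
    (htwo :
      ((∀ s : ℝ, 0 < s → Summable fun n => msum (RA n) s) ∧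
        (∀ s : ℝ, 0 < s → Summable fun n => msum (RB n) s)) ∨
      ((∀ s : ℝ, 0 < s → Summable fun n => msum (RA n) s) ∧
        (∀ s : ℝ, 0 < s → Summable fun n => msum (RC n) s)) ∨
      ((∀ s : ℝ, 0 < s → Summable fun n => msum (RB n) s) ∧
        (∀ s : ℝ, 0 < s → Summable fun n => msum (RC n) s))) :
    (∀ s : ℝ, 0 < s → Summable fun n => msum (RA n) s) ∧
    (∀ s : ℝ, 0 < s → Summable fun n => msum (RB n) s) ∧
    (∀ s : ℝ, 0 < s → Summable fun n => msum (RC n) s) ∧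
    Summable (fun n : ℤ => ‖((-1 : ℂ) ^ n) * (RA n).sum‖) ∧
    Summable (fun n : ℤ => ‖((-1 : ℂ) ^ n) * (RB n).sum‖) ∧
    Summable (fun n : ℤ => ‖((-1 : ℂ) ^ n) * (RC n).sum‖) ∧
    (∑' n : ℤ, ((-1 : ℂ) ^ n) * (RB n).sum) =
      (∑' n : ℤ, ((-1 : ℂ) ^ n) * (RA n).sum) +
      (∑' n : ℤ, ((-1 : ℂ) ^ n) * (RC n).sum) := by
  -- summability of the pieces
  have splitA : ∀ s : ℝ, (Summable fun n => msum (RA n) s) →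
      (Summable fun n => msum (Ra n) s) ∧ (Summable fun n => msum (Rb n) s) := by
    intro s h
    have : (fun n => msum (RA n) s) = fun n => msum (Ra n) s + msum (Rb n) s := by
      funext n; rw [hA n, msum_add]
    rw [this] at h
    exact summable_split (fun n => msum_nonneg _ _) (fun n => msum_nonneg _ _) h
  have splitB : ∀ s : ℝ, (Summable fun n => msum (RB n) s) →
      (Summable fun n => msum (Rb n) s) ∧ (Summable fun n => msum (Rc n) s) := by
    intro s h
    have : (fun n => msum (RB n) s) = fun n => msum (Rb n) s + msum (Rc n) s := by
      funext n; rw [hB n, msum_add]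
    rw [this] at h
    exact summable_split (fun n => msum_nonneg _ _) (fun n => msum_nonneg _ _) h
  have splitC : ∀ s : ℝ, (Summable fun n => msum (RC n) s) →
      (Summable fun n => msum (Rc n) s) ∧ (Summable fun n => msum (Ra (n + 1)) s) := by
    intro s h
    have : (fun n => msum (RC n) s) = fun n => msum (Rc n) s + msum (Ra (n + 1)) s := by
      funext n; rw [hC n, msum_add]
    rw [this] at h
    exact summable_split (fun n => msum_nonneg _ _) (fun n => msum_nonneg _ _) h
  -- given summability of the pieces, each total family is summable
  have buildA : ∀ s : ℝ, (Summable fun n => msum (Ra n) s) →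
      (Summable fun n => msum (Rb n) s) → (Summable fun n => msum (RA n) s) := by
    intro s ha hb
    have : (fun n => msum (RA n) s) = fun n => msum (Ra n) s + msum (Rb n) s := by
      funext n; rw [hA n, msum_add]
    rw [this]; exact ha.add hb
  have buildB : ∀ s : ℝ, (Summable fun n => msum (Rb n) s) →
      (Summable fun n => msum (Rc n) s) → (Summable fun n => msum (RB n) s) := by
    intro s hb hc
    have : (fun n => msum (RB n) s) = fun n => msum (Rb n) s + msum (Rc n) s := by
      funext n; rw [hB n, msum_add]
    rw [this]; exact hb.add hc
  have buildC : ∀ s : ℝ, (Summable fun n => msum (Rc n) s) →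
      (Summable fun n => msum (Ra (n + 1)) s) → (Summable fun n => msum (RC n) s) := by
    intro s hc ha
    have : (fun n => msum (RC n) s) = fun n => msum (Rc n) s + msum (Ra (n + 1)) s := by
      funext n; rw [hC n, msum_add]
    rw [this]; exact hc.add ha
  -- derive convergence of all three families
  have hall : (∀ s : ℝ, 0 < s → Summable fun n => msum (RA n) s) ∧
      (∀ s : ℝ, 0 < s → Summable fun n => msum (RB n) s) ∧
      (∀ s : ℝ, 0 < s → Summable fun n => msum (RC n) s) := by
    rcases htwo with ⟨h1, h2⟩ | ⟨h1, h2⟩ | ⟨h1, h2⟩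
    · refine ⟨h1, h2, fun s hs => ?_⟩
      exact buildC s (splitB s (h2 s hs)).2
        ((summable_shift (fun m => msum (Ra m) s)).mpr (splitA s (h1 s hs)).1)
    · refine ⟨h1, fun s hs => ?_, h2⟩
      exact buildB s (splitA s (h1 s hs)).2 (splitC s (h2 s hs)).1
    · refine ⟨fun s hs => ?_, h1, h2⟩
      exact buildA s ((summable_shift (fun m => msum (Ra m) s)).mp (splitC s (h2 s hs)).2)
        (splitB s (h1 s hs)).1
  obtain ⟨hSA, hSB, hSC⟩ := hall
  -- specialize to s = 1
  have hA1 := hSA 1 one_pos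
  have hB1 := hSB 1 one_pos
  have hC1 := hSC 1 one_pos
  have ha1 := (splitA 1 hA1).1
  have hb1 := (splitA 1 hA1).2
  have hc1 := (splitB 1 hB1).2
  have ha1' := (splitC 1 hC1).2
  -- norm facts
  have hnorm : ∀ (n : ℤ) (z : ℂ), ‖((-1 : ℂ) ^ n) * z‖ = ‖z‖ := by
    intro n z
    rw [norm_mul, norm_zpow, norm_neg, norm_one, one_zpow, one_mul]
  -- summability of the three trace series
  have htrA : Summable (fun n : ℤ => ‖((-1 : ℂ) ^ n) * (RA n).sum‖) := by
    refine hA1.of_nonneg_of_le (fun n => norm_nonneg _) (fun n => ?_)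
    rw [hnorm]; exact norm_sum_le_msum_one _
  have htrB : Summable (fun n : ℤ => ‖((-1 : ℂ) ^ n) * (RB n).sum‖) := by
    refine hB1.of_nonneg_of_le (fun n => norm_nonneg _) (fun n => ?_)
    rw [hnorm]; exact norm_sum_le_msum_one _
  have htrC : Summable (fun n : ℤ => ‖((-1 : ℂ) ^ n) * (RC n).sum‖) := by
    refine hC1.of_nonneg_of_le (fun n => norm_nonneg _) (fun n => ?_)
    rw [hnorm]; exact norm_sum_le_msum_one _
  refine ⟨hSA, hSB, hSC, htrA, htrB, htrC, ?_⟩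
  -- the trace identity
  set ta : ℤ → ℂ := fun n => ((-1 : ℂ) ^ n) * (Ra n).sum with hta
  set tb : ℤ → ℂ := fun n => ((-1 : ℂ) ^ n) * (Rb n).sum with htb
  set tc : ℤ → ℂ := fun n => ((-1 : ℂ) ^ n) * (Rc n).sum with htc
  have sta : Summable ta := by
    refine Summable.of_norm (ha1.of_nonneg_of_le (fun n => norm_nonneg _) (fun n => ?_))
    rw [hta, hnorm]; exact norm_sum_le_msum_one _
  have stb : Summable tb := by
    refine Summable.of_norm (hb1.of_nonneg_of_le (fun n => norm_nonneg _) (fun n => ?_))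
    rw [htb, hnorm]; exact norm_sum_le_msum_one _
  have stc : Summable tc := by
    refine Summable.of_norm (hc1.of_nonneg_of_le (fun n => norm_nonneg _) (fun n => ?_))
    rw [htc, hnorm]; exact norm_sum_le_msum_one _
  have sta' : Summable (fun n : ℤ => ta (n + 1)) := (summable_shift ta).mpr sta
  have hzpow : ∀ n : ℤ, ((-1 : ℂ) ^ (n + 1)) = -((-1 : ℂ) ^ n) := by
    intro n
    rw [zpow_add_one₀ (by norm_num : (-1 : ℂ) ≠ 0)]
    ring
  have hBsum : (fun n : ℤ => ((-1 : ℂ) ^ n) * (RB n).sum) = fun n => tb n + tc n := by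
    funext n
    rw [htb, htc, hB n, Multiset.sum_add]
    ring
  have hAsum : (fun n : ℤ => ((-1 : ℂ) ^ n) * (RA n).sum) = fun n => ta n + tb n := by
    funext n
    rw [hta, htb, hA n, Multiset.sum_add]
    ring
  have hCsum : (fun n : ℤ => ((-1 : ℂ) ^ n) * (RC n).sum) = fun n => tc n + (-(ta (n + 1))) := by
    funext n
    simp only [htc, hta, hC n, Multiset.sum_add, hzpow n]
    ring
  rw [hAsum, hBsum, hCsum]
  rw [Summable.tsum_add stb stc, Summable.tsum_add sta stb, Summable.tsum_add stc (sta'.neg)]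
  have hshift : (∑' n : ℤ, ta (n + 1)) = ∑' n, ta n := by
    have := (Equiv.addRight (1 : ℤ)).tsum_eq ta
    simpa using this
  rw [tsum_neg, hshift]
  ring

end Aux

/-- A `ℤ`-indexed family of finite-dimensional complex vector spaces with endomorphisms
(vanishing in large degrees) is *convergent* if for every real `s > 0` the series over
`n ∈ ℤ` of `∑_λ |λ|^s` converges, `λ` running over the eigenvalues (roots of the
characteristic polynomial, with multiplicity) of the endomorphism in degree `n`. -/
def ConvergentFamily (V : ℤ → Type*) [∀ n, AddCommGroup (V n)] [∀ n, Module ℂ (V n)]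
    [∀ n, FiniteDimensional ℂ (V n)] (φ : ∀ n, V n →ₗ[ℂ] V n) : Prop :=
  ∀ s : ℝ, 0 < s →
    Summable fun n : ℤ =>
      (((LinearMap.charpoly (φ n)).roots).map fun z => ‖z‖ ^ s).sum

/-- Long exact sequence of `ℤ`-indexed families of finite-dimensional complex vector
spaces with commuting endomorphisms, all vanishing in sufficiently large degrees:
if two of the three families are convergent then so is the third, the alternating sums
of traces converge absolutely, and
`∑ (-1)^n Tr(β_n) = ∑ (-1)^n Tr(α_n) + ∑ (-1)^n Tr(γ_n)`. -/
theorem trace_add_of_longExact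
    (A B C : ℤ → Type*) [∀ n, AddCommGroup (A n)] [∀ n, Module ℂ (A n)]
    [∀ n, FiniteDimensional ℂ (A n)] [∀ n, AddCommGroup (B n)] [∀ n, Module ℂ (B n)]
    [∀ n, FiniteDimensional ℂ (B n)] [∀ n, AddCommGroup (C n)] [∀ n, Module ℂ (C n)]
    [∀ n, FiniteDimensional ℂ (C n)]
    (α : ∀ n, A n →ₗ[ℂ] A n) (β : ∀ n, B n →ₗ[ℂ] B n) (γ : ∀ n, C n →ₗ[ℂ] C n)
    (N : ℤ)
    (hvan : ∀ n : ℤ, N ≤ n → Subsingleton (A n) ∧ Subsingleton (B n) ∧ Subsingleton (C n))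
    (u : ∀ n, A n →ₗ[ℂ] B n) (v : ∀ n, B n →ₗ[ℂ] C n) (δ : ∀ n, C n →ₗ[ℂ] A (n + 1))
    (huv : ∀ n, Function.Exact (u n) (v n))
    (hvδ : ∀ n, Function.Exact (v n) (δ n))
    (hδu : ∀ n, Function.Exact (δ n) (u (n + 1)))
    (hu : ∀ n, (β n) ∘ₗ (u n) = (u n) ∘ₗ (α n))
    (hv : ∀ n, (γ n) ∘ₗ (v n) = (v n) ∘ₗ (β n))
    (hδ : ∀ n, (α (n + 1)) ∘ₗ (δ n) = (δ n) ∘ₗ (γ n))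
    (htwo : (ConvergentFamily A α ∧ ConvergentFamily B β) ∨
      (ConvergentFamily A α ∧ ConvergentFamily C γ) ∨
      (ConvergentFamily B β ∧ ConvergentFamily C γ)) :
    ConvergentFamily A α ∧ ConvergentFamily B β ∧ ConvergentFamily C γ ∧
    Summable (fun n : ℤ => ‖((-1 : ℂ) ^ n) * LinearMap.trace ℂ (A n) (α n)‖) ∧
    Summable (fun n : ℤ => ‖((-1 : ℂ) ^ n) * LinearMap.trace ℂ (B n) (β n)‖) ∧
    Summable (fun n : ℤ => ‖((-1 : ℂ) ^ n) * LinearMap.trace ℂ (C n) (γ n)‖) ∧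
    (∑' n : ℤ, ((-1 : ℂ) ^ n) * LinearMap.trace ℂ (B n) (β n)) =
      (∑' n : ℤ, ((-1 : ℂ) ^ n) * LinearMap.trace ℂ (A n) (α n)) +
      (∑' n : ℤ, ((-1 : ℂ) ^ n) * LinearMap.trace ℂ (C n) (γ n)) := by
  classical
  -- invariance of the kernels
  have hKinv : ∀ n, ∀ x ∈ LinearMap.ker (u n), α n x ∈ LinearMap.ker (u n) := by
    intro n x hx
    rw [LinearMap.mem_ker] at hx ⊢
    have h := LinearMap.congr_fun (hu n) x
    simp only [LinearMap.comp_apply] at h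
    rw [← h, hx, map_zero]
  have hLinv : ∀ n, ∀ x ∈ LinearMap.ker (v n), β n x ∈ LinearMap.ker (v n) := by
    intro n x hx
    rw [LinearMap.mem_ker] at hx ⊢
    have h := LinearMap.congr_fun (hv n) x
    simp only [LinearMap.comp_apply] at h
    rw [← h, hx, map_zero]
  have hMinv : ∀ n, ∀ x ∈ LinearMap.ker (δ n), γ n x ∈ LinearMap.ker (δ n) := by
    intro n x hx
    rw [LinearMap.mem_ker] at hx ⊢
    have h := LinearMap.congr_fun (hδ n) x
    simp only [LinearMap.comp_apply] at h
    rw [← h, hx, map_zero]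
  -- charpoly comparisons via the first isomorphism theorem
  have cj1 : ∀ n, ((β n).restrict (hLinv n)).charpoly
      = (Submodule.mapQ (LinearMap.ker (u n)) (LinearMap.ker (u n)) (α n)
          (fun x hx => hKinv n x hx)).charpoly := by
    intro n
    refine charpoly_eq_of_conj
      (((u n).quotKerEquivRange).trans
        (LinearEquiv.ofEq _ _ (LinearMap.exact_iff.mp (huv n)).symm)) _ _ ?_
    intro x
    obtain ⟨a, rfl⟩ := Submodule.Quotient.mk_surjective _ x
    apply Subtype.ext
    show β n (u n a) = u n (α n a)
    exact LinearMap.congr_fun (hu n) a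
  have cj2 : ∀ n, ((γ n).restrict (hMinv n)).charpoly
      = (Submodule.mapQ (LinearMap.ker (v n)) (LinearMap.ker (v n)) (β n)
          (fun x hx => hLinv n x hx)).charpoly := by
    intro n
    refine charpoly_eq_of_conj
      (((v n).quotKerEquivRange).trans
        (LinearEquiv.ofEq _ _ (LinearMap.exact_iff.mp (hvδ n)).symm)) _ _ ?_
    intro x
    obtain ⟨b, rfl⟩ := Submodule.Quotient.mk_surjective _ x
    apply Subtype.ext
    show γ n (v n b) = v n (β n b)
    exact LinearMap.congr_fun (hv n) b
  have cj3 : ∀ n, ((α (n + 1)).restrict (hKinv (n + 1))).charpoly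
      = (Submodule.mapQ (LinearMap.ker (δ n)) (LinearMap.ker (δ n)) (γ n)
          (fun x hx => hMinv n x hx)).charpoly := by
    intro n
    refine charpoly_eq_of_conj
      (((δ n).quotKerEquivRange).trans
        (LinearEquiv.ofEq _ _ (LinearMap.exact_iff.mp (hδu n)).symm)) _ _ ?_
    intro x
    obtain ⟨c, rfl⟩ := Submodule.Quotient.mk_surjective _ x
    apply Subtype.ext
    show α (n + 1) (δ n c) = δ n (γ n c)
    exact LinearMap.congr_fun (hδ n) c
  -- the root multiset identities
  have FA : ∀ n, (α n).charpoly.roots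
      = ((α n).restrict (hKinv n)).charpoly.roots
        + ((β n).restrict (hLinv n)).charpoly.roots := by
    intro n
    rw [charpoly_restrict_mul_mapQ (α n) _ (hKinv n),
      Polynomial.roots_mul (mul_ne_zero (LinearMap.charpoly_monic _).ne_zero
        (LinearMap.charpoly_monic _).ne_zero), ← cj1 n]
  have FB : ∀ n, (β n).charpoly.roots
      = ((β n).restrict (hLinv n)).charpoly.roots
        + ((γ n).restrict (hMinv n)).charpoly.roots := by
    intro n
    rw [charpoly_restrict_mul_mapQ (β n) _ (hLinv n),
      Polynomial.roots_mul (mul_ne_zero (LinearMap.charpoly_monic _).ne_zero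
        (LinearMap.charpoly_monic _).ne_zero), ← cj2 n]
  have FC : ∀ n, (γ n).charpoly.roots
      = ((γ n).restrict (hMinv n)).charpoly.roots
        + ((α (n + 1)).restrict (hKinv (n + 1))).charpoly.roots := by
    intro n
    rw [charpoly_restrict_mul_mapQ (γ n) _ (hMinv n),
      Polynomial.roots_mul (mul_ne_zero (LinearMap.charpoly_monic _).ne_zero
        (LinearMap.charpoly_monic _).ne_zero), ← cj3 n]
  have main := aux_main (fun n => (α n).charpoly.roots) (fun n => (β n).charpoly.roots)
    (fun n => (γ n).charpoly.roots)
    (fun n => ((α n).restrict (hKinv n)).charpoly.roots)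
    (fun n => ((β n).restrict (hLinv n)).charpoly.roots)
    (fun n => ((γ n).restrict (hMinv n)).charpoly.roots)
    FA FB FC htwo
  obtain ⟨c1, c2, c3, s1, s2, s3, heq⟩ := main
  refine ⟨c1, c2, c3, ?_, ?_, ?_, ?_⟩
  · simpa only [trace_eq_sum_roots_cpx] using s1
  · simpa only [trace_eq_sum_roots_cpx] using s2
  · simpa only [trace_eq_sum_roots_cpx] using s3
  · simpa only [trace_eq_sum_roots_cpx] using heq
end

section
/- Let k be a field, V a finite-dimensional k-vector space, φ : V → V a k-linear endomorphism, and d ≥ 1 an integer. Let B = V^{⊕d} (d-tuples of vectors) and define the k-linear endomorphism F : B → B by F(x_0, x_1, …, x_{d−1}) = (φ(x_{d−1}), x_0, x_1, …, x_{d−2}). Then the characteristic polynomial of F on B equals the characteristic polynomial of φ on V evaluated at X^d, i.e. det(X·id_B − F) = det(X^d·id_V − φ); equivalently det(id_B − X·F) = det(id_V − X^d·φ) in k[X]. -/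
open Polynomial Matrix Equiv

namespace CharpolyCyclicAux

variable {R : Type*} [CommRing R] {ι : Type*} [Fintype ι] [DecidableEq ι]

/-- The block-cyclic matrix: block row `0` has `M` in block column `d-1`, block row `i > 0`
has the identity in block column `i-1`. -/
def cyc (M : Matrix ι ι R) (d : ℕ) : Matrix (Fin d × ι) (Fin d × ι) R := fun p q =>
  if p.1.1 = 0 then (if q.1.1 = d - 1 then M p.2 q.2 else 0)
  else (if p.1.1 = q.1.1 + 1 ∧ p.2 = q.2 then 1 else 0)

/-- The obvious equivalence between a block of indices and `ι`. -/
def blkEquiv {d : ℕ} (t : Fin d) : {p : Fin d × ι // p.1.1 = t.1} ≃ ι where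
  toFun p := p.1.2
  invFun u := ⟨(t, u), rfl⟩
  left_inv := by
    rintro ⟨⟨i, r⟩, h⟩
    simp only at h
    have : t = i := Fin.ext h.symm
    subst this
    rfl
  right_inv u := rfl

theorem cyc_charpoly (M : Matrix ι ι R) (m : ℕ) :
    (cyc M (m + 1)).charpoly = M.charpoly.comp (X ^ (m + 1)) := by
  classical
  rcases isEmpty_or_nonempty ι with hι | hι
  · haveI : IsEmpty (Fin (m + 1) × ι) := ⟨fun p => hι.false p.2⟩
    rw [Matrix.charpoly, Matrix.det_isEmpty, Matrix.charpoly, Matrix.det_isEmpty, one_comp]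
  set d := m + 1 with hd
  set A : Matrix (Fin d × ι) (Fin d × ι) R[X] := charmatrix (cyc M d) with hA
  set E : Matrix (Fin d × ι) (Fin d × ι) R[X] := fun p q =>
    if p = q then 1 else if q.1.1 = m ∧ p.2 = q.2 then X ^ (m - p.1.1) else 0 with hE
  set A' : Matrix (Fin d × ι) (Fin d × ι) R[X] := fun p q =>
    if q.1.1 = m then
      (if p.1.1 = 0 then (if p.2 = q.2 then X ^ d else 0) - C (M p.2 q.2) else 0)
    else (if p = q then X else 0) - (if p.1.1 = q.1.1 + 1 ∧ p.2 = q.2 then 1 else 0) with hA'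
  have hAapp : ∀ p q, A p q = (if p = q then X else 0) - C (cyc M d p q) := by
    intro p q
    rw [hA, charmatrix_apply, diagonal_apply]
  -- Step 1 : A * E = A'
  have step1 : A * E = A' := by
    refine Matrix.ext ?_
    rintro ⟨i, r⟩ ⟨j, s⟩
    rw [mul_apply, Fintype.sum_prod_type]
    by_cases hj : j.1 = m
    · have hEcol : ∀ (t : Fin d) (u : ι), E (t, u) (j, s) =
          if u = s then (X : R[X]) ^ (m - t.1) else 0 := by
        intro t u
        simp only [hE]
        by_cases h1 : ((t, u) : Fin d × ι) = (j, s)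
        · obtain ⟨h2, h3⟩ := Prod.mk_inj.mp h1
          simp [h1, h2, h3, hj]
        · by_cases h2 : u = s
          · rw [if_neg h1, if_pos ⟨hj, h2⟩, if_pos h2]
          · rw [if_neg h1, if_neg (by tauto), if_neg h2]
      simp only [hEcol, mul_ite, mul_zero]
      have hsum : ∀ t : Fin d,
          (∑ u : ι, if u = s then A (i, r) (t, u) * (X : R[X]) ^ (m - t.1) else 0)
          = A (i, r) (t, s) * (X : R[X]) ^ (m - t.1) := by
        intro t
        rw [Finset.sum_ite_eq' Finset.univ s (fun u => A (i, r) (t, u) * (X : R[X]) ^ (m - t.1))]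
        simp
      simp only [hsum]
      simp only [hAapp, sub_mul]
      rw [Finset.sum_sub_distrib]
      have e1 : (∑ t : Fin d,
            (if ((i, r) : Fin d × ι) = (t, s) then (X : R[X]) else 0) * X ^ (m - t.1))
          = if r = s then (X : R[X]) ^ (m - i.1 + 1) else 0 := by
        rw [Finset.sum_eq_single i]
        · by_cases h2 : r = s
          · rw [if_pos (by rw [h2]), if_pos h2, ← pow_succ']
          · rw [if_neg (by simp [Prod.ext_iff]; tauto), if_neg h2, zero_mul]
        · intro t _ ht
          rw [if_neg (by simp [Prod.ext_iff]; intro h; exact absurd h.symm ht), zero_mul]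
        · simp
      rw [e1]
      by_cases hi : i.1 = 0
      · have e2 : (∑ t : Fin d, C (cyc M d (i, r) (t, s)) * (X : R[X]) ^ (m - t.1))
            = C (M r s) := by
          rw [Finset.sum_eq_single (Fin.last m)]
          · simp [cyc, hi, Fin.last, show d - 1 = m by omega]
          · intro t _ ht
            have hne : ¬ t.1 = m := fun h => ht (Fin.ext h)
            simp [cyc, hi, hne, show d - 1 = m by omega]
          · simp
        rw [e2]
        simp only [hA']
        simp only [hj, if_true, hi, if_true]
        have hde : m - 0 + 1 = d := by omega
        rw [hde]
      · have e2 : (∑ t : Fin d, C (cyc M d (i, r) (t, s)) * (X : R[X]) ^ (m - t.1))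
            = if r = s then (X : R[X]) ^ (m - (i.1 - 1)) else 0 := by
          rw [Finset.sum_eq_single (⟨i.1 - 1, by omega⟩ : Fin d)]
          · have h1 : cyc M d (i, r) ((⟨i.1 - 1, by omega⟩ : Fin d), s)
                = if r = s then 1 else 0 := by
              simp only [cyc, hi, if_false]
              by_cases h2 : r = s
              · rw [if_pos ⟨by omega, h2⟩, if_pos h2]
              · rw [if_neg (by tauto), if_neg h2]
            rw [h1, apply_ite C, C_1, C_0, ite_mul, one_mul, zero_mul]
          · intro t _ ht
            have hne : ¬ i.1 = t.1 + 1 := by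
              intro h
              exact ht (Fin.ext (show t.1 = i.1 - 1 by omega))
            simp [cyc, hi, hne]
          · simp
        rw [e2]
        simp only [hA']
        simp only [hj, if_true, hi, if_false]
        have hexp : m - i.1 + 1 = m - (i.1 - 1) := by
          have := i.isLt; omega
        rw [hexp, sub_self]
    · have hEcol : ∀ (t : Fin d) (u : ι), E (t, u) (j, s) =
          if ((t, u) : Fin d × ι) = (j, s) then 1 else 0 := by
        intro t u
        simp only [hE]
        by_cases h1 : ((t, u) : Fin d × ι) = (j, s)
        · simp [h1]
        · rw [if_neg h1, if_neg (by tauto), if_neg h1]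
      simp only [hEcol, mul_ite, mul_one, mul_zero]
      rw [Finset.sum_comm]
      rw [Finset.sum_eq_single s]
      · rw [Finset.sum_eq_single j]
        · rw [if_pos rfl, hAapp]
          simp only [hA']
          rw [if_neg hj]
          have hcyc : C (cyc M d (i, r) (j, s)) =
              (if i.1 = j.1 + 1 ∧ r = s then (1 : R[X]) else 0) := by
            by_cases hi : i.1 = 0
            · have h2 : ¬ i.1 = j.1 + 1 := by omega
              simp [cyc, hi, hj, h2, show d - 1 = m by omega]
            · simp only [cyc, hi, if_false]
              rw [apply_ite C, C_1, C_0]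
          rw [hcyc]
        · intro t _ ht
          rw [if_neg (by simp [Prod.ext_iff]; tauto)]
        · simp
      · intro u _ hu
        apply Finset.sum_eq_zero
        intro t _
        rw [if_neg (by simp [Prod.ext_iff]; tauto)]
      · simp
  -- Step 2 : det E = 1
  have step2 : E.det = 1 := by
    have hbt : E.BlockTriangular (fun p => if p.1.1 = m then 1 else (0 : ℕ)) := by
      rintro ⟨i, r⟩ ⟨j, s⟩ h
      simp only at h
      have hij : i.1 = m ∧ ¬ j.1 = m := by
        by_cases h1 : i.1 = m <;> by_cases h2 : j.1 = m <;> simp [h1, h2] at h <;> tauto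
      simp only [hE]
      have c1 : ¬ ((i, r) : Fin d × ι) = (j, s) := by
        intro hh
        have := congrArg (fun p : Fin d × ι => (p.1.1 : ℕ)) hh
        simp only at this
        omega
      rw [if_neg c1, if_neg (by tauto)]
    rw [hbt.det]
    apply Finset.prod_eq_one
    intro a _
    have hone : E.toSquareBlock (fun p => if p.1.1 = m then 1 else (0 : ℕ)) a = 1 := by
      refine Matrix.ext ?_
      rintro ⟨⟨pi, pr⟩, hp⟩ ⟨⟨qi, qr⟩, hq⟩
      simp only at hp hq
      rw [Matrix.toSquareBlock_def]
      simp only [Matrix.of_apply, one_apply, hE]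
      by_cases h1 : ((pi, pr) : Fin d × ι) = (qi, qr)
      · rw [if_pos h1, if_pos (Subtype.ext h1)]
      · rw [if_neg h1, if_neg ?_, if_neg (fun hh => h1 (Subtype.ext_iff.mp hh))]
        rintro ⟨h2, h3⟩
        have hpim : pi.1 = m := by
          by_contra hh
          rw [if_neg hh] at hp
          rw [if_pos h2] at hq
          omega
        have : pi = qi := Fin.ext (by omega)
        exact h1 (by rw [this, h3])
    rw [hone, det_one]
  -- Step 3
  set e : Perm (Fin d) := (finRotate (m + 1))⁻¹ with he'
  have he : ∀ j : Fin d, ((e j).1 = m ∧ j.1 = 0) ∨ (e j).1 + 1 = j.1 := by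
    intro j
    have hj : ((e j) + 1 : Fin (m + 1)) = j := by
      rw [← finRotate_succ_apply]
      exact Equiv.apply_symm_apply _ j
    have hv : j.1 = if e j = Fin.last m then 0 else (e j).1 + 1 := by
      have hv0 := Fin.val_add_one (e j)
      rw [hj] at hv0
      exact hv0
    by_cases h : e j = Fin.last m
    · left
      constructor
      · rw [h, Fin.val_last]
      · rw [hv, if_pos h]
    · right
      rw [hv, if_neg h]
  set ρ : Perm (Fin d × ι) := Equiv.prodCongrLeft (fun _ : ι => e) with hρ
  set A'' : Matrix (Fin d × ι) (Fin d × ι) R[X] := A'.submatrix id ⇑ρ with hA''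
  have hA''app : ∀ p q : Fin d × ι, A'' p q = A' p (e q.1, q.2) := fun p q => rfl
  have hbt : A''.BlockTriangular (fun p => (p.1.1 : ℕ)) := by
    rintro ⟨i, r⟩ ⟨j, s⟩ h
    simp only at h
    rw [hA''app]
    simp only [hA']
    rcases he j with ⟨h1, h2⟩ | h1
    · rw [if_pos h1, if_neg (by omega)]
    · have hm : ¬ (e j).1 = m := by have := j.isLt; omega
      have c1 : ¬ ((i, r) : Fin d × ι) = (e j, s) := by
        intro hh
        have := congrArg (fun p : Fin d × ι => (p.1.1 : ℕ)) hh
        simp only at this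
        omega
      have c2 : ¬ (i.1 = (e j).1 + 1 ∧ r = s) := by
        rintro ⟨h2, -⟩
        omega
      rw [if_neg hm, if_neg c1, if_neg c2, sub_zero]
  have himg : Finset.image (fun p : Fin d × ι => p.1.1) Finset.univ
      = Finset.image (fun t : Fin d => t.1) Finset.univ := by
    ext a
    simp only [Finset.mem_image, Finset.mem_univ, true_and]
    constructor
    · rintro ⟨p, hp⟩; exact ⟨p.1, hp⟩
    · rintro ⟨t, ht⟩
      obtain ⟨u⟩ := hι
      exact ⟨(t, u), ht⟩
  -- blocks
  have blockdet : ∀ t : Fin d,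
      (A''.toSquareBlock (fun p => (p.1.1 : ℕ)) t.1).det =
        if t.1 = 0 then M.charpoly.comp ((X : R[X]) ^ d) else (-1) ^ Fintype.card ι := by
    intro t
    set ε : {p : Fin d × ι // p.1.1 = t.1} ≃ ι := blkEquiv t with hε
    by_cases ht : t.1 = 0
    · set B0 : Matrix ι ι R[X] := fun r s => (if r = s then X ^ d else 0) - C (M r s) with hB0
      have hblk : A''.toSquareBlock (fun p => (p.1.1 : ℕ)) t.1 = B0.submatrix ε ε := by
        refine Matrix.ext ?_
        rintro ⟨⟨i, r⟩, hp⟩ ⟨⟨j, s⟩, hq⟩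
        simp only at hp hq
        rw [Matrix.toSquareBlock_def]
        simp only [Matrix.of_apply, Matrix.submatrix_apply]
        rw [hA''app]
        simp only [hA']
        rcases he j with ⟨h1, h2⟩ | h1
        · rw [if_pos h1, if_pos (by omega)]
          rfl
        · omega
      rw [if_pos ht, hblk, Matrix.det_submatrix_equiv_self]
      have hmap : B0 = (charmatrix M).map (eval₂RingHom Polynomial.C ((X : R[X]) ^ d) :
          R[X] →+* R[X]) := by
        refine Matrix.ext fun r s => ?_
        rw [Matrix.map_apply, charmatrix_apply, diagonal_apply]
        simp only [hB0, map_sub, coe_eval₂RingHom, eval₂_C]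
        congr 1
        split
        · rw [eval₂_X]
        · rw [eval₂_zero]
      rw [hmap, ← RingHom.mapMatrix_apply, ← RingHom.map_det]
      rfl
    · have hblk : A''.toSquareBlock (fun p => (p.1.1 : ℕ)) t.1 =
          (-1 : Matrix ι ι R[X]).submatrix ε ε := by
        refine Matrix.ext ?_
        rintro ⟨⟨i, r⟩, hp⟩ ⟨⟨j, s⟩, hq⟩
        simp only at hp hq
        rw [Matrix.toSquareBlock_def]
        simp only [Matrix.of_apply, Matrix.submatrix_apply]
        rw [hA''app]
        simp only [hA']
        rcases he j with ⟨h1, h2⟩ | h1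
        · omega
        · have hm : ¬ (e j).1 = m := by have := j.isLt; omega
          have c1 : ¬ ((i, r) : Fin d × ι) = (e j, s) := by
            intro hh
            have := congrArg (fun p : Fin d × ι => (p.1.1 : ℕ)) hh
            simp only at this
            omega
          have hcond : i.1 = (e j).1 + 1 := by omega
          rw [if_neg hm, if_neg c1, zero_sub]
          show -(if i.1 = (e j).1 + 1 ∧ r = s then (1 : R[X]) else 0)
            = (-1 : Matrix ι ι R[X]) r s
          simp [hcond, Matrix.neg_apply, one_apply]
      rw [if_neg ht, hblk, Matrix.det_submatrix_equiv_self, Matrix.det_neg, Matrix.det_one,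
        mul_one]
  have hdetA'' : A''.det = M.charpoly.comp ((X : R[X]) ^ d)
      * (((-1 : R[X]) ^ Fintype.card ι) ^ m) := by
    rw [hbt.det, himg, Finset.prod_image (by intro x _ y _ h; exact Fin.ext h)]
    simp only [blockdet]
    rw [Fin.prod_univ_succ]
    have h0 : ((0 : Fin d) : ℕ) = 0 := rfl
    rw [h0, if_pos rfl]
    congr 1
    have hsucc : ∀ i : Fin m, (if ((i.succ : Fin d) : ℕ) = 0
        then M.charpoly.comp ((X : R[X]) ^ d) else (-1 : R[X]) ^ Fintype.card ι)
        = (-1 : R[X]) ^ Fintype.card ι := by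
      intro i
      rw [if_neg (by simp [Fin.val_succ])]
    rw [Finset.prod_congr rfl (fun i _ => hsucc i), Finset.prod_const, Finset.card_univ,
      Fintype.card_fin]
  -- sign computation
  have hsign : Equiv.Perm.sign ρ = ((-1 : ℤˣ) ^ m) ^ Fintype.card ι := by
    rw [hρ, Equiv.Perm.sign_prodCongrLeft]
    rw [Finset.prod_const, Finset.card_univ]
    congr 1
    rw [he', map_inv, sign_finRotate]
    simp [show d - 1 = m by omega]
  have hperm := Matrix.det_permute' ρ A'
  rw [← hA''] at hperm
  -- conclude
  have hcast : ((↑(Equiv.Perm.sign ρ) : ℤ) : R[X]) = ((-1 : R[X]) ^ m) ^ Fintype.card ι := by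
    rw [hsign]
    push_cast
    norm_num
  have hone : ((-1 : R[X]) ^ m) ^ Fintype.card ι * ((-1 : R[X]) ^ Fintype.card ι) ^ m = 1 := by
    rw [← pow_mul, ← pow_mul, mul_comm m, ← pow_add, ← two_mul, pow_mul, neg_one_sq, one_pow]
  have hfin : A'.det = M.charpoly.comp ((X : R[X]) ^ d) := by
    have h2 : A''.det = ((↑(Equiv.Perm.sign ρ) : ℤ) : R[X]) * A'.det := hperm
    have h3 : ((↑(Equiv.Perm.sign ρ) : ℤ) : R[X]) * A''.det = A'.det := by
      rw [h2, ← mul_assoc, hcast]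
      have hsq : ((-1 : R[X]) ^ m) ^ Fintype.card ι * ((-1 : R[X]) ^ m) ^ Fintype.card ι
          = 1 := by
        have h4 : ((-1 : R[X]) ^ m) ^ 2 = 1 := by
          rw [← pow_mul, mul_comm, pow_mul, neg_one_sq, one_pow]
        rw [← pow_add, ← two_mul, pow_mul, h4, one_pow]
      rw [hsq, one_mul]
    rw [← h3, hdetA'', hcast, ← mul_assoc]
    rw [mul_comm (((-1 : R[X]) ^ m) ^ Fintype.card ι) (M.charpoly.comp ((X : R[X]) ^ d)),
      mul_assoc, hone, mul_one]
  calc (cyc M d).charpoly = A.det := rfl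
    _ = A.det * E.det := by rw [step2, mul_one]
    _ = (A * E).det := (Matrix.det_mul A E).symm
    _ = A'.det := by rw [step1]
    _ = M.charpoly.comp (X ^ d) := hfin

end CharpolyCyclicAux

/-- Let `φ` be an endomorphism of a finite-dimensional `k`-vector space `V` and `d ≥ 1`.
On `B = V^{⊕d}` define `F (x_0, …, x_{d-1}) = (φ (x_{d-1}), x_0, …, x_{d-2})`.  Then the
characteristic polynomial of `F` is the characteristic polynomial of `φ` evaluated at
`X^d`, i.e. `det (X·id_B - F) = det (X^d·id_V - φ)`. -/
theorem charpoly_cyclic_induced {k : Type*} [Field k] (V : Type*) [AddCommGroup V]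
    [Module k V] [FiniteDimensional k V] (φ : V →ₗ[k] V) (d : ℕ) (hd : 0 < d)
    (F : (Fin d → V) →ₗ[k] (Fin d → V))
    (hF : ∀ (x : Fin d → V) (i : Fin d),
      F x i = if i.1 = 0 then φ (x ⟨d - 1, Nat.sub_lt hd Nat.one_pos⟩)
        else x ⟨i.1 - 1, Nat.lt_of_le_of_lt (Nat.sub_le i.1 1) i.isLt⟩) :
    LinearMap.charpoly F = (LinearMap.charpoly φ).comp (Polynomial.X ^ d) := by
  classical
  obtain ⟨m, rfl⟩ : ∃ m, d = m + 1 := ⟨d - 1, by omega⟩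
  set n := Module.finrank k V with hn
  set bV : Module.Basis (Fin n) k V := Module.finBasis k V with hbV
  set B : Module.Basis ((_ : Fin (m + 1)) × Fin n) k (Fin (m + 1) → V) :=
    Pi.basis (fun _ => bV) with hB
  set M : Matrix (Fin n) (Fin n) k := LinearMap.toMatrix bV bV φ with hM
  have h1 : LinearMap.charpoly F = (LinearMap.toMatrix B B F).charpoly :=
    (LinearMap.charpoly_toMatrix F B).symm
  have h2 : LinearMap.charpoly φ = M.charpoly := (LinearMap.charpoly_toMatrix φ bV).symm
  rw [h1, h2]
  rw [← Matrix.charpoly_reindex (Equiv.sigmaEquivProd (Fin (m + 1)) (Fin n))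
    (LinearMap.toMatrix B B F)]
  have h3 : Matrix.reindex (Equiv.sigmaEquivProd (Fin (m + 1)) (Fin n))
      (Equiv.sigmaEquivProd (Fin (m + 1)) (Fin n)) (LinearMap.toMatrix B B F)
      = CharpolyCyclicAux.cyc M (m + 1) := by
    refine Matrix.ext ?_
    rintro ⟨i, r⟩ ⟨j, s⟩
    rw [Matrix.reindex_apply, Matrix.submatrix_apply]
    have hsymm : ∀ (p : Fin (m + 1) × Fin n),
        (Equiv.sigmaEquivProd (Fin (m + 1)) (Fin n)).symm p = ⟨p.1, p.2⟩ := fun p => rfl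
    rw [hsymm, hsymm, LinearMap.toMatrix_apply]
    rw [hB, Pi.basis_apply, Pi.basis_repr]
    rw [hF]
    by_cases hi : i.1 = 0
    · rw [if_pos hi]
      simp only [CharpolyCyclicAux.cyc, hi, if_true]
      rw [Pi.single_apply]
      by_cases hj : j.1 = m + 1 - 1
      · rw [if_pos (Fin.ext (by simpa using hj.symm)), if_pos hj, hM,
          LinearMap.toMatrix_apply]
      · rw [if_neg (fun h => hj (by rw [← h])), if_neg hj, map_zero, map_zero]
        simp
    · rw [if_neg hi]
      simp only [CharpolyCyclicAux.cyc, hi, if_false]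
      rw [Pi.single_apply]
      by_cases hj : i.1 = j.1 + 1
      · rw [if_pos (Fin.ext (show i.1 - 1 = j.1 by omega) :
            (⟨i.1 - 1, Nat.lt_of_le_of_lt (Nat.sub_le i.1 1) i.isLt⟩ : Fin (m + 1)) = j)]
        rw [Module.Basis.repr_self, Finsupp.single_apply]
        by_cases hrs : r = s
        · rw [if_pos hrs.symm, if_pos ⟨hj, hrs⟩]
        · rw [if_neg (fun hh => hrs hh.symm), if_neg (fun hh => hrs hh.2)]
      · rw [if_neg (fun hh => hj (by
            have h5 : i.1 - 1 = j.1 := congrArg Fin.val hh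
            omega)), if_neg (fun hh => hj hh.1)]
        simp
  rw [h3, CharpolyCyclicAux.cyc_charpoly]
end

section
/- Let k be a field, V a finite-dimensional k-vector space, φ : V → V a k-linear endomorphism, and d ≥ 1 an integer. Let B = V^{⊕d} and define F : B → B by F(x_0, x_1, …, x_{d−1}) = (φ(x_{d−1}), x_0, x_1, …, x_{d−2}). Then for every integer v ≥ 1: if d divides v then Tr(F^v, B) = d · Tr(φ^{v/d}, V), and if d does not divide v then Tr(F^v, B) = 0. -/
section Aux

variable {k : Type*} [Field k] {V : Type*} [AddCommGroup V]
    [Module k V] (φ : V →ₗ[k] V) {d : ℕ} (hd : 0 < d)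
    (F : (Fin d → V) →ₗ[k] (Fin d → V))
    (hF : ∀ (x : Fin d → V) (i : Fin d),
      F x i = if i.1 = 0 then φ (x ⟨d - 1, Nat.sub_lt hd Nat.one_pos⟩)
        else x ⟨i.1 - 1, Nat.lt_of_le_of_lt (Nat.sub_le i.1 1) i.isLt⟩)

include hF in
lemma key_pow : ∀ (v : ℕ) (x : Fin d → V) (i : Fin d) (j : ℕ) (hj : j < d)
    (hji : (j + v) % d = i.1),
    (F ^ v) x i = (φ ^ ((v + (d - 1 - i.1)) / d)) (x ⟨j, hj⟩) := by
  intro v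
  induction v with
  | zero =>
    intro x i j hj hji
    rw [Nat.add_zero, Nat.mod_eq_of_lt hj] at hji
    have hi : (d - 1 - i.1) < d := by omega
    rw [pow_zero, Nat.zero_add, Nat.div_eq_of_lt hi, pow_zero]
    simp only [Module.End.one_apply]
    congr 1
    exact Fin.ext hji.symm
  | succ v ih =>
    intro x i j hj hji
    rw [← Nat.add_assoc] at hji
    rw [pow_succ', Module.End.mul_apply, hF]
    have hid : i.1 < d := i.isLt
    by_cases h0 : i.1 = 0
    · rw [if_pos h0]
      -- source index for F^v at position d-1 is j : need (j+v) % d = d-1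
      have hm : (j + v) % d < d := Nat.mod_lt _ hd
      have hstep : (j + v + 1) % d = ((j + v) % d + 1) % d := by
        conv_lhs => rw [← Nat.mod_add_mod]
      have hprev : (j + v) % d = d - 1 := by
        rcases Nat.lt_or_ge ((j + v) % d + 1) d with h | h
        · exfalso
          rw [hstep, Nat.mod_eq_of_lt h] at hji
          omega
        · omega
      have := ih x ⟨d - 1, Nat.sub_lt hd Nat.one_pos⟩ j hj hprev
      rw [this, ← Module.End.mul_apply, ← pow_succ']
      congr 2
      have h1 : v + (d - 1 - (d - 1)) = v := by omega
      have h2 : d - 1 - i.1 = d - 1 := by omega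
      rw [h1, h2]
      have h3 : v + 1 + (d - 1) = v + d := by omega
      rw [h3, Nat.add_div_right v hd]
    · rw [if_neg h0]
      have hm : (j + v) % d < d := Nat.mod_lt _ hd
      have hstep : (j + v + 1) % d = ((j + v) % d + 1) % d := by
        conv_lhs => rw [← Nat.mod_add_mod]
      have hprev : (j + v) % d = i.1 - 1 := by
        rcases Nat.lt_or_ge ((j + v) % d + 1) d with h | h
        · rw [hstep, Nat.mod_eq_of_lt h] at hji
          omega
        · exfalso
          have hd1 : (j + v) % d = d - 1 := by omega
          rw [hstep, hd1] at hji
          have : (d - 1 + 1) = d := by omega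
          rw [this, Nat.mod_self] at hji
          omega
      have := ih x ⟨i.1 - 1, Nat.lt_of_le_of_lt (Nat.sub_le i.1 1) i.isLt⟩ j hj hprev
      rw [this]
      congr 2
      have : v + (d - 1 - (i.1 - 1)) = v + 1 + (d - 1 - i.1) := by omega
      rw [this]

end Aux

/-- Let `φ` be an endomorphism of a finite-dimensional `k`-vector space `V` and `d ≥ 1`.
On `B = V^{⊕d}` define `F (x_0, …, x_{d-1}) = (φ (x_{d-1}), x_0, …, x_{d-2})`.  Then for
every `v ≥ 1`: if `d ∣ v` then `Tr(F^v) = d · Tr(φ^{v/d})`, and otherwise `Tr(F^v) = 0`. -/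
theorem trace_pow_cyclic_induced {k : Type*} [Field k] (V : Type*) [AddCommGroup V]
    [Module k V] [FiniteDimensional k V] (φ : V →ₗ[k] V) (d : ℕ) (hd : 0 < d)
    (F : (Fin d → V) →ₗ[k] (Fin d → V))
    (hF : ∀ (x : Fin d → V) (i : Fin d),
      F x i = if i.1 = 0 then φ (x ⟨d - 1, Nat.sub_lt hd Nat.one_pos⟩)
        else x ⟨i.1 - 1, Nat.lt_of_le_of_lt (Nat.sub_le i.1 1) i.isLt⟩) :
    ∀ v : ℕ, 1 ≤ v →
      (d ∣ v →
        LinearMap.trace k (Fin d → V) (F ^ v) = (d : k) * LinearMap.trace k V (φ ^ (v / d))) ∧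
      (¬ d ∣ v → LinearMap.trace k (Fin d → V) (F ^ v) = 0) := by
  intro v hv
  classical
  set n := Module.finrank k V
  set s : Module.Basis (Fin n) k V := Module.finBasis k V
  set b : Module.Basis ((_ : Fin d) × Fin n) k (Fin d → V) := Pi.basis (fun _ : Fin d => s)
  have htr : LinearMap.trace k (Fin d → V) (F ^ v) =
      ∑ p : (_ : Fin d) × Fin n, b.repr ((F ^ v) (b p)) p := by
    rw [LinearMap.trace_eq_matrix_trace k b, Matrix.trace]
    simp [Matrix.diag, LinearMap.toMatrix_apply]
  constructor
  · intro hdvd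
    obtain ⟨q, rfl⟩ := hdvd
    have hq : d * q / d = q := Nat.mul_div_cancel_left q hd
    rw [htr, hq]
    have hdiag : ∀ p : (_ : Fin d) × Fin n,
        b.repr ((F ^ (d * q)) (b p)) p = s.repr ((φ ^ q) (s p.2)) p.2 := by
      rintro ⟨i, x⟩
      have hji : (i.1 + d * q) % d = i.1 := by
        rw [Nat.add_mul_mod_self_left, Nat.mod_eq_of_lt i.isLt]
      have hrep : b.repr ((F ^ (d * q)) (b ⟨i, x⟩)) ⟨i, x⟩
          = s.repr (((F ^ (d * q)) (b ⟨i, x⟩)) i) x := rfl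
      have := key_pow φ hd F hF (d * q) (b ⟨i, x⟩) i i.1 i.isLt hji
      rw [hrep, this]
      have hexp : (d * q + (d - 1 - i.1)) / d = q := by
        rw [Nat.mul_add_div hd, Nat.div_eq_of_lt (by omega), Nat.add_zero]
      rw [hexp]
      have hb : b ⟨i, x⟩ = Pi.single i (s x) := by
        simp [b, Pi.basis_apply]
      rw [hb]
      have : (⟨i.1, i.isLt⟩ : Fin d) = i := Fin.ext rfl
      rw [this, Pi.single_eq_same]
    rw [Finset.sum_congr rfl (fun p _ => hdiag p)]
    rw [← Finset.univ_sigma_univ, Finset.sum_sigma]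
    have : ∀ i : Fin d, ∑ x : Fin n, s.repr ((φ ^ q) (s x)) x =
        LinearMap.trace k V (φ ^ q) := by
      intro i
      rw [LinearMap.trace_eq_matrix_trace k s, Matrix.trace]
      simp [Matrix.diag, LinearMap.toMatrix_apply]
    simp only [this]
    rw [Finset.sum_const, Finset.card_univ, Fintype.card_fin, nsmul_eq_mul]
    rw [this ⟨0, hd⟩]
  · intro hndvd
    rw [htr]
    apply Finset.sum_eq_zero
    rintro ⟨i, x⟩ -
    set j : ℕ := (i.1 + (d - v % d)) % d with hjdef
    have hjlt : j < d := Nat.mod_lt _ hd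
    have hvd := Nat.div_add_mod v d
    have hvmlt : v % d < d := Nat.mod_lt _ hd
    have hji : (j + v) % d = i.1 := by
      rw [hjdef, Nat.mod_add_mod]
      have hmul : d * (v / d + 1) = d * (v / d) + d := by ring
      have : i.1 + (d - v % d) + v = i.1 + d * (v / d + 1) := by omega
      rw [this, Nat.add_mul_mod_self_left, Nat.mod_eq_of_lt i.isLt]
    have hne : j ≠ i.1 := by
      intro h
      apply hndvd
      rw [h] at hji
      have h2 : (i.1 + v) % d = (i.1 + v % d) % d := by
        conv_lhs => rw [← Nat.div_add_mod v d]
        have : i.1 + (d * (v / d) + v % d) = i.1 + v % d + d * (v / d) := by omega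
        rw [this, Nat.add_mul_mod_self_left]
      rw [h2] at hji
      rcases Nat.lt_or_ge (i.1 + v % d) d with h3 | h3
      · rw [Nat.mod_eq_of_lt h3] at hji
        have : v % d = 0 := by omega
        exact Nat.dvd_of_mod_eq_zero this
      · exfalso
        have h4 : i.1 + v % d - d < d := by omega
        rw [Nat.mod_eq_sub_mod h3, Nat.mod_eq_of_lt h4] at hji
        omega
    have hrep : b.repr ((F ^ v) (b ⟨i, x⟩)) ⟨i, x⟩
        = s.repr (((F ^ v) (b ⟨i, x⟩)) i) x := rfl
    have := key_pow φ hd F hF v (b ⟨i, x⟩) i j hjlt hji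
    rw [hrep, this]
    have hb : b ⟨i, x⟩ = Pi.single i (s x) := by
      simp [b, Pi.basis_apply]
    rw [hb, Pi.single_eq_of_ne (by exact fun h => hne (congrArg Fin.val h)) _]
    rw [map_zero]
    simp
end

section
/- Let N₀ be an integer, and for each integer n ≤ N₀ let α_{n,1}, …, α_{n,m_n} be finitely many complex numbers (m_n ≥ 0, with m_n = 0 allowed). Assume that for every real s > 0 the series ∑_{n ≤ N₀} ∑_{j=1}^{m_n} |α_{n,j}|^s converges. Then: (1) for each integer v ≥ 1 the series c_v := ∑_{n ≤ N₀} (−1)^n ∑_{j=1}^{m_n} α_{n,j}^v converges absolutely; and (2) setting P_n(t) := ∏_{j=1}^{m_n} (1 − α_{n,j} t) ∈ ℂ[t], the infinite product ∏_{n ≤ N₀} P_n(t)^{(−1)^{n+1}} converges term by term in ℂ[[t]] to the formal power series exp(∑_{v≥1} c_v t^v / v). -/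
open Filter

/-- The formal exponential `exp h = ∑_{m ≥ 0} h^m / m!` of a power series `h` with zero
constant term.  Since `h` has zero constant term, the coefficient of `t^k` only receives
contributions from `m ≤ k`. -/
noncomputable def pexp (h : PowerSeries ℂ) : PowerSeries ℂ :=
  PowerSeries.mk fun k =>
    ∑ m ∈ Finset.range (k + 1), ((Nat.factorial m : ℂ))⁻¹ * PowerSeries.coeff k (h ^ m)

open PowerSeries

lemma coeff_pexp (h : PowerSeries ℂ) (k : ℕ) :
    coeff k (pexp h) =
      ∑ m ∈ Finset.range (k + 1), ((Nat.factorial m : ℂ))⁻¹ * coeff k (h ^ m) := by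
  simp [pexp]

lemma coeff_pow_eq_zero {h : PowerSeries ℂ} (hh : constantCoeff h = 0) {k mm : ℕ}
    (hkm : k < mm) : coeff k (h ^ mm) = 0 := by
  have : (X : PowerSeries ℂ) ^ mm ∣ h ^ mm := pow_dvd_pow_of_dvd (X_dvd_iff.mpr hh) mm
  exact (X_pow_dvd_iff.mp this) k hkm

lemma coeff_mul_pow_eq_zero {g h : PowerSeries ℂ} (hg : constantCoeff g = 0)
    (hh : constantCoeff h = 0) {k i l : ℕ} (hkm : k < i + l) :
    coeff k (g ^ i * h ^ l) = 0 := by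
  have : (X : PowerSeries ℂ) ^ (i + l) ∣ g ^ i * h ^ l := by
    rw [pow_add]
    exact mul_dvd_mul (pow_dvd_pow_of_dvd (X_dvd_iff.mpr hg) i)
      (pow_dvd_pow_of_dvd (X_dvd_iff.mpr hh) l)
  exact (X_pow_dvd_iff.mp this) k hkm

lemma coeff_pexp' {h : PowerSeries ℂ} (hh : constantCoeff h = 0) {k M : ℕ} (hM : k < M) :
    coeff k (pexp h) =
      ∑ m ∈ Finset.range M, ((Nat.factorial m : ℂ))⁻¹ * coeff k (h ^ m) := by
  rw [coeff_pexp]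
  apply Finset.sum_subset
  · exact Finset.range_subset_range.2 hM
  · intro x _ hx
    rw [Finset.mem_range, not_lt] at hx
    rw [coeff_pow_eq_zero hh hx]
    ring

lemma fact_choose_id {i mm : ℕ} (him : i ≤ mm) :
    ((mm.factorial : ℂ))⁻¹ * (mm.choose i : ℂ) =
      ((i.factorial : ℂ))⁻¹ * (((mm - i).factorial : ℂ))⁻¹ := by
  have h := Nat.choose_mul_factorial_mul_factorial him
  have h2 : (mm.choose i : ℂ) * (i.factorial : ℂ) * ((mm - i).factorial : ℂ)
      = (mm.factorial : ℂ) := by exact_mod_cast congrArg (Nat.cast : ℕ → ℂ) h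
  have hC : (mm.choose i : ℂ) ≠ 0 := Nat.cast_ne_zero.2 (Nat.choose_pos him).ne'
  have hi : (i.factorial : ℂ) ≠ 0 := Nat.cast_ne_zero.2 i.factorial_ne_zero
  have hmi : (((mm - i).factorial : ℂ)) ≠ 0 := Nat.cast_ne_zero.2 (mm - i).factorial_ne_zero
  rw [← h2, mul_inv, mul_inv]
  field_simp

lemma pexp_add {g h : PowerSeries ℂ} (hg : constantCoeff g = 0)
    (hh : constantCoeff h = 0) : pexp (g + h) = pexp g * pexp h := by
  ext n
  set c : ℕ → ℕ → ℂ := fun i l =>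
    ((i.factorial : ℂ))⁻¹ * ((l.factorial : ℂ))⁻¹ * coeff n (g ^ i * h ^ l) with hcdef
  have hczero : ∀ i l : ℕ, n < i + l → c i l = 0 := by
    intro i l hil
    simp only [hcdef]
    rw [coeff_mul_pow_eq_zero hg hh hil, mul_zero]
  have key : ∑ m ∈ Finset.range (n+1), ∑ i ∈ Finset.range (m+1), c i (m - i)
      = ∑ i ∈ Finset.range (n+1), ∑ l ∈ Finset.range (n+1), c i l := by
    rw [← Finset.sum_product']
    have h1 : ∀ m, ∑ i ∈ Finset.range (m+1), c i (m - i)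
        = ∑ p ∈ Finset.HasAntidiagonal.antidiagonal m, c p.1 p.2 :=
      fun m => (Finset.Nat.sum_antidiagonal_eq_sum_range_succ_mk (fun p => c p.1 p.2) m).symm
    simp_rw [h1]
    rw [← Finset.sum_biUnion]
    · apply Finset.sum_subset
      · intro p hp
        simp only [Finset.mem_biUnion, Finset.mem_range, Finset.HasAntidiagonal.mem_antidiagonal] at hp
        obtain ⟨m, hm, rfl⟩ := hp
        simp only [Finset.mem_product, Finset.mem_range]
        omega
      · intro p hp hnp
        apply hczero
        simp only [Finset.mem_biUnion, Finset.mem_range, Finset.HasAntidiagonal.mem_antidiagonal] at hnp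
        push_neg at hnp
        by_contra hle
        exact hnp (p.1 + p.2) (by omega) rfl
    · intro a _ b _ hab
      simp only [Finset.disjoint_left, Finset.HasAntidiagonal.mem_antidiagonal]
      rintro p rfl h2
      subst h2; exact hab rfl
  have hlhs : coeff n (pexp (g + h))
      = ∑ m ∈ Finset.range (n+1), ∑ i ∈ Finset.range (m+1), c i (m - i) := by
    rw [coeff_pexp]
    apply Finset.sum_congr rfl
    intro mm _
    rw [add_pow, map_sum, Finset.mul_sum]
    apply Finset.sum_congr rfl
    intro i hi
    rw [Finset.mem_range] at hi
    have hi' : i ≤ mm := by omega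
    have hcast : ((mm.choose i : ℕ) : PowerSeries ℂ) = C ((mm.choose i : ℕ) : ℂ) :=
      (map_natCast C _).symm
    rw [hcast, coeff_mul_C]
    simp only [hcdef]
    linear_combination (coeff n (g ^ i * h ^ (mm - i))) * fact_choose_id hi'
  have hrhs : coeff n (pexp g * pexp h)
      = ∑ i ∈ Finset.range (n+1), ∑ l ∈ Finset.range (n+1), c i l := by
    rw [coeff_mul]
    have hexp : ∀ p ∈ Finset.HasAntidiagonal.antidiagonal n, coeff p.1 (pexp g) * coeff p.2 (pexp h)
        = ∑ i ∈ Finset.range (n+1), ∑ l ∈ Finset.range (n+1),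
            (((i.factorial : ℂ))⁻¹ * coeff p.1 (g ^ i))
              * (((l.factorial : ℂ))⁻¹ * coeff p.2 (h ^ l)) := by
      intro p hp
      rw [Finset.HasAntidiagonal.mem_antidiagonal] at hp
      rw [coeff_pexp' hg (by omega : p.1 < n+1), coeff_pexp' hh (by omega : p.2 < n+1),
        Finset.sum_mul_sum]
    rw [Finset.sum_congr rfl hexp, Finset.sum_comm]
    apply Finset.sum_congr rfl
    intro i _
    rw [Finset.sum_comm]
    apply Finset.sum_congr rfl
    intro l _
    simp only [hcdef]
    rw [coeff_mul, Finset.mul_sum]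
    apply Finset.sum_congr rfl
    intro p _
    ring
  rw [hlhs, hrhs, key]

lemma pexp_zero : pexp 0 = 1 := by
  ext k
  rw [coeff_pexp]
  rcases Nat.eq_zero_or_pos k with hk | hk
  · subst hk; simp
  · rw [Finset.sum_eq_zero, PowerSeries.coeff_one, if_neg hk.ne']
    intro x hx
    rcases Nat.eq_zero_or_pos x with hx0 | hx0
    · subst hx0; simp [PowerSeries.coeff_one, hk.ne']
    · rw [zero_pow hx0.ne', map_zero, mul_zero]

lemma constantCoeff_pexp (h : PowerSeries ℂ) : constantCoeff (pexp h) = 1 := by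
  rw [← coeff_zero_eq_constantCoeff_apply, coeff_pexp]
  simp

lemma pexp_sum {ι : Type*} (s : Finset ι) (f : ι → PowerSeries ℂ)
    (hf : ∀ i ∈ s, constantCoeff (f i) = 0) :
    pexp (∑ i ∈ s, f i) = ∏ i ∈ s, pexp (f i) := by
  classical
  induction s using Finset.induction_on with
  | empty => simp [pexp_zero]
  | insert a s' hnotmem ih =>
    rw [Finset.sum_insert hnotmem, Finset.prod_insert hnotmem,
      pexp_add (hf a (Finset.mem_insert_self a s'))
        (by rw [map_sum]; exact Finset.sum_eq_zero fun i hi => hf i (Finset.mem_insert_of_mem hi)),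
      ih fun i hi => hf i (Finset.mem_insert_of_mem hi)]

lemma pexp_ne_zero (h : PowerSeries ℂ) : pexp h ≠ 0 := fun hc => by
  have := constantCoeff_pexp h
  rw [hc, map_zero] at this
  exact zero_ne_one this

lemma pexp_neg_eq_inv {h : PowerSeries ℂ} (hh : constantCoeff h = 0) :
    pexp (-h) = (pexp h)⁻¹ := by
  rw [PowerSeries.eq_inv_iff_mul_eq_one (by rw [constantCoeff_pexp]; exact one_ne_zero),
    ← pexp_add (by rw [map_neg, hh, neg_zero]) hh, neg_add_cancel, pexp_zero]

lemma derivative_pexp {h : PowerSeries ℂ} (hh : constantCoeff h = 0) :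
    d⁄dX ℂ (pexp h) = d⁄dX ℂ h * pexp h := by
  ext k
  rw [coeff_derivative, coeff_pexp' hh (by omega : k + 1 < k + 2)]
  have step1 : (∑ m ∈ Finset.range (k + 2),
        ((Nat.factorial m : ℂ))⁻¹ * coeff (k+1) (h ^ m)) * ((k:ℂ) + 1)
      = ∑ i ∈ Finset.range (k + 1),
          ((Nat.factorial i : ℂ))⁻¹ * coeff k (h ^ i * d⁄dX ℂ h) := by
    rw [Finset.sum_mul, Finset.sum_range_succ' (fun m => ((Nat.factorial m : ℂ))⁻¹
      * coeff (k+1) (h ^ m) * ((k:ℂ) + 1))]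
    have hzero : ((Nat.factorial 0 : ℂ))⁻¹ * coeff (k+1) (h ^ 0) * ((k:ℂ)+1) = 0 := by
      simp [PowerSeries.coeff_one]
    rw [hzero, add_zero]
    apply Finset.sum_congr rfl
    intro i _
    have hd : coeff (k+1) (h ^ (i+1)) * ((k:ℂ)+1) = coeff k (d⁄dX ℂ (h ^ (i+1))) := by
      rw [coeff_derivative]
    have hpow : d⁄dX ℂ (h ^ (i+1)) = (i+1) • (h ^ i * d⁄dX ℂ h) := by
      rw [Derivation.leibniz_pow]
      simp [smul_smul, Nat.succ_sub_one, smul_eq_mul]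
    have hfac : ((Nat.factorial (i+1) : ℂ))⁻¹ * ((i:ℂ)+1) = ((Nat.factorial i : ℂ))⁻¹ := by
      have h1 : ((i:ℂ)+1) ≠ 0 := Nat.cast_add_one_ne_zero i
      have h2 : (((i+1).factorial : ℕ) : ℂ) = ((i:ℂ)+1) * (i.factorial : ℂ) := by
        push_cast [Nat.factorial_succ]; ring
      rw [h2, mul_inv, mul_comm (((i:ℂ)+1))⁻¹, mul_assoc, inv_mul_cancel₀ h1, mul_one]
    rw [mul_assoc, hd, hpow, map_nsmul, nsmul_eq_mul]
    push_cast
    linear_combination coeff k (h ^ i * d⁄dX ℂ h) * hfac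
  rw [step1, coeff_mul]
  have hexp : ∀ p ∈ Finset.HasAntidiagonal.antidiagonal k, coeff p.1 (d⁄dX ℂ h) * coeff p.2 (pexp h)
      = ∑ i ∈ Finset.range (k+1),
          ((Nat.factorial i : ℂ))⁻¹ * (coeff p.1 (d⁄dX ℂ h) * coeff p.2 (h ^ i)) := by
    intro p hp
    rw [Finset.HasAntidiagonal.mem_antidiagonal] at hp
    rw [coeff_pexp' hh (by omega : p.2 < k+1), Finset.mul_sum]
    apply Finset.sum_congr rfl
    intro i _
    ring
  rw [Finset.sum_congr rfl hexp, Finset.sum_comm]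
  apply Finset.sum_congr rfl
  intro i _
  rw [← Finset.mul_sum]
  congr 1
  rw [mul_comm (h ^ i) _, coeff_mul]

lemma coeff_derivative_mul_X (f : PowerSeries ℂ) (k : ℕ) :
    coeff k (d⁄dX ℂ f * X) = (k : ℂ) * coeff k f := by
  cases k with
  | zero => simp [PowerSeries.coeff_zero_eq_constantCoeff, map_mul]
  | succ j =>
    rw [coeff_succ_mul_X, coeff_derivative]
    push_cast
    ring

lemma ode_uniq (a : ℂ) (f g : PowerSeries ℂ)
    (hf : (1 - C a * X) * d⁄dX ℂ f = - C a * f)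
    (hg : (1 - C a * X) * d⁄dX ℂ g = - C a * g)
    (h0 : constantCoeff f = constantCoeff g) : f = g := by
  have main : ∀ k, coeff k f = coeff k g := by
    intro k
    induction k with
    | zero => simpa [PowerSeries.coeff_zero_eq_constantCoeff] using h0
    | succ k ih =>
      have expand : ∀ u : PowerSeries ℂ, coeff k ((1 - C a * X) * d⁄dX ℂ u)
          = coeff (k+1) u * ((k:ℂ)+1) - a * ((k:ℂ) * coeff k u) := by
        intro u
        rw [sub_mul, one_mul, map_sub, coeff_derivative]
        congr 1
        rw [mul_assoc, mul_comm (X : PowerSeries ℂ) (d⁄dX ℂ u), coeff_C_mul,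
          coeff_derivative_mul_X]
      have hca : ∀ u : PowerSeries ℂ, coeff k (- C a * u) = -a * coeff k u := by
        intro u
        rw [neg_mul, map_neg, coeff_C_mul, neg_mul]
      have Hf := congrArg (coeff k) hf
      have Hg := congrArg (coeff k) hg
      rw [expand, hca] at Hf Hg
      have hne : ((k:ℂ)+1) ≠ 0 := Nat.cast_add_one_ne_zero k
      have : coeff (k+1) f * ((k:ℂ)+1) = coeff (k+1) g * ((k:ℂ)+1) := by
        linear_combination Hf - Hg + (a * (k:ℂ) - a) * ih
      exact mul_right_cancel₀ hne this
  ext k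
  exact main k

noncomputable def Lser (a : ℂ) : PowerSeries ℂ :=
  PowerSeries.mk fun v => if v = 0 then 0 else -(a ^ v) / v

lemma constantCoeff_Lser (a : ℂ) : constantCoeff (Lser a) = 0 := by
  rw [← PowerSeries.coeff_zero_eq_constantCoeff_apply]
  simp [Lser]

lemma coeff_deriv_Lser (a : ℂ) (k : ℕ) : coeff k (d⁄dX ℂ (Lser a)) = -a ^ (k+1) := by
  rw [coeff_derivative]
  simp only [Lser, coeff_mk, Nat.succ_ne_zero, if_false]
  have hne : ((k:ℂ)+1) ≠ 0 := Nat.cast_add_one_ne_zero k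
  push_cast
  field_simp

lemma dLser (a : ℂ) : (1 - C a * X) * d⁄dX ℂ (Lser a) = - C a := by
  ext k
  rw [sub_mul, one_mul, map_sub, mul_assoc, mul_comm (X : PowerSeries ℂ), coeff_C_mul,
    coeff_derivative_mul_X, coeff_deriv_Lser]
  cases k with
  | zero => simp
  | succ j =>
    have h1 : coeff (j+1) (- C a) = 0 := by
      rw [map_neg, coeff_C, if_neg (Nat.succ_ne_zero j)]
      simp
    have h2 : coeff (j+1) (Lser a) = -(a ^ (j+1)) / ((j:ℂ)+1) := by
      simp only [Lser, coeff_mk, Nat.succ_ne_zero, if_false]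
      push_cast
      ring
    rw [h1, h2]
    have hne : ((j:ℂ)+1) ≠ 0 := Nat.cast_add_one_ne_zero j
    push_cast
    field_simp
    ring

lemma pexp_Lser (a : ℂ) : pexp (Lser a) = 1 - C a * X := by
  apply ode_uniq a
  · rw [derivative_pexp (constantCoeff_Lser a), ← mul_assoc, dLser]
  · have dcx : d⁄dX ℂ (1 - C a * X) = - C a := by
      rw [map_sub]
      have : d⁄dX ℂ ((C a) * X) = C a := by
        rw [Derivation.leibniz]
        simp [smul_eq_mul]
      rw [this]
      simp
    rw [dcx]
    ring
  · rw [constantCoeff_pexp, map_sub, map_one, map_mul, constantCoeff_X, mul_zero, sub_zero]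

section assembly
variable (N₀ : ℤ) (m : ℤ → ℕ) (α : (n : ℤ) → Fin (m n) → ℂ)

noncomputable def lser (n : ℤ) : PowerSeries ℂ :=
  PowerSeries.mk fun v => if v = 0 then 0 else ((-1 : ℂ) ^ n * ∑ j, α n j ^ v) / v

lemma constantCoeff_lser (n : ℤ) : constantCoeff (lser m α n) = 0 := by
  rw [← PowerSeries.coeff_zero_eq_constantCoeff_apply]
  simp [lser]

lemma factor_eq (n : ℤ) :
    (if Even n then (∏ j, (1 - PowerSeries.C (α n j) * PowerSeries.X))⁻¹
      else ∏ j, (1 - PowerSeries.C (α n j) * PowerSeries.X)) = pexp (lser m α n) := by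
  have hprod : ∏ j, (1 - PowerSeries.C (α n j) * PowerSeries.X)
      = pexp (∑ j, Lser (α n j)) := by
    rw [pexp_sum _ _ (fun j _ => constantCoeff_Lser (α n j))]
    exact Finset.prod_congr rfl fun j _ => (pexp_Lser (α n j)).symm
  have hcs : constantCoeff (∑ j, Lser (α n j)) = 0 := by
    rw [map_sum]
    exact Finset.sum_eq_zero fun j _ => constantCoeff_Lser (α n j)
  by_cases hev : Even n
  · rw [if_pos hev, hprod, ← pexp_neg_eq_inv hcs]
    have harg : -∑ j, Lser (α n j) = lser m α n := by
      ext v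
      simp only [map_neg, map_sum, lser, coeff_mk, Lser]
      split_ifs with hv
      · simp
      · rw [hev.neg_one_zpow, one_mul, ← Finset.sum_div]
        simp [neg_div, Finset.sum_div]
    rw [harg]
  · rw [if_neg hev, hprod]
    have harg : ∑ j, Lser (α n j) = lser m α n := by
      ext v
      simp only [map_sum, lser, coeff_mk, Lser]
      split_ifs with hv
      · simp
      · rw [(Int.not_even_iff_odd.mp hev).neg_one_zpow]
        simp [neg_div, Finset.sum_div]
    rw [harg]

lemma prod_eq (S : Finset ℤ) :
    (∏ n ∈ S, if Even n then (∏ j, (1 - PowerSeries.C (α n j) * PowerSeries.X))⁻¹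
      else ∏ j, (1 - PowerSeries.C (α n j) * PowerSeries.X))
    = pexp (PowerSeries.mk fun v => if v = 0 then 0
        else (∑ n ∈ S, (-1 : ℂ) ^ n * ∑ j, α n j ^ v) / v) := by
  rw [Finset.prod_congr rfl fun n _ => factor_eq m α n,
    ← pexp_sum _ _ (fun n _ => constantCoeff_lser m α n)]
  have harg : ∑ n ∈ S, lser m α n = PowerSeries.mk fun v => if v = 0 then 0
      else (∑ n ∈ S, (-1 : ℂ) ^ n * ∑ j, α n j ^ v) / v := by
    ext v
    rw [map_sum]
    simp only [lser, coeff_mk]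
    split_ifs with hv
    · simp
    · rw [Finset.sum_div]
  rw [harg]

end assembly

lemma tendsto_coeff_pow (gN : ℕ → ℕ → ℂ) (g : ℕ → ℂ)
    (hg : ∀ v, Tendsto (fun N => gN N v) atTop (nhds (g v))) (mm : ℕ) :
    ∀ k : ℕ, Tendsto (fun N => coeff k ((PowerSeries.mk (gN N)) ^ mm)) atTop
      (nhds (coeff k ((PowerSeries.mk g) ^ mm))) := by
  induction mm with
  | zero => intro k; simp only [pow_zero]; exact tendsto_const_nhds
  | succ mm ih =>
    intro k
    simp only [pow_succ, coeff_mul]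
    apply tendsto_finset_sum
    intro p _
    exact (ih p.1).mul (by simpa only [coeff_mk] using hg p.2)

lemma tendsto_coeff_pexp (gN : ℕ → ℕ → ℂ) (g : ℕ → ℂ)
    (hg : ∀ v, Tendsto (fun N => gN N v) atTop (nhds (g v))) (k : ℕ) :
    Tendsto (fun N => coeff k (pexp (PowerSeries.mk (gN N)))) atTop
      (nhds (coeff k (pexp (PowerSeries.mk g)))) := by
  simp only [coeff_pexp]
  apply tendsto_finset_sum
  intro mm _
  exact (tendsto_coeff_pow gN g hg mm k).const_mul _

section final
variable (N₀ : ℤ) (m : ℤ → ℕ) (α : (n : ℤ) → Fin (m n) → ℂ)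

lemma part1 (hconv : ∀ s : ℝ, 0 < s → Summable fun n : ℤ => ∑ j, ‖α n j‖ ^ s)
    (v : ℕ) (hv : 1 ≤ v) : Summable fun n : ℤ => ‖∑ j, α n j ^ v‖ := by
  apply Summable.of_nonneg_of_le (fun n => norm_nonneg _) _
    (hconv v (by exact_mod_cast Nat.succ_le_iff.mp hv))
  intro n
  calc ‖∑ j, α n j ^ v‖ ≤ ∑ j, ‖α n j ^ v‖ := norm_sum_le _ _
    _ = ∑ j, ‖α n j‖ ^ ((v : ℝ)) := by
        apply Finset.sum_congr rfl
        intro j _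
        rw [norm_pow, Real.rpow_natCast]

lemma summ2 (hconv : ∀ s : ℝ, 0 < s → Summable fun n : ℤ => ∑ j, ‖α n j‖ ^ s)
    (v : ℕ) (hv : 1 ≤ v) : Summable fun n : ℤ => (-1 : ℂ) ^ n * ∑ j, α n j ^ v := by
  apply Summable.of_norm
  simp only [norm_mul, norm_zpow, norm_neg, norm_one, one_zpow, one_mul]
  exact part1 m α hconv v hv

lemma hIccTendsto : Tendsto (fun N : ℕ => Finset.Icc (N₀ - (N:ℤ)) (N₀ + (N:ℤ))) atTop atTop := by
  apply Filter.tendsto_atTop_finset_of_monotone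
  · intro N M hNM
    apply Finset.Icc_subset_Icc <;> omega
  · intro x
    exact ⟨(N₀ - x).toNat + (x - N₀).toNat, by simp only [Finset.mem_Icc]; omega⟩

lemma sum_trunc (hm : ∀ n : ℤ, N₀ < n → m n = 0) (v : ℕ) (N : ℕ) :
    ∑ n ∈ Finset.Icc (N₀ - (N:ℤ)) (N₀ + (N:ℤ)), (-1 : ℂ) ^ n * ∑ j, α n j ^ v
      = ∑ n ∈ Finset.Icc (N₀ - (N:ℤ)) N₀, (-1 : ℂ) ^ n * ∑ j, α n j ^ v := by
  apply (Finset.sum_subset (Finset.Icc_subset_Icc_right (by omega)) _).symm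
  intro n hn hn2
  simp only [Finset.mem_Icc] at hn hn2
  have hlt : N₀ < n := by omega
  have hmn : m n = 0 := hm n hlt
  have : ∑ j, α n j ^ v = 0 := by
    apply Finset.sum_eq_zero
    intro j _
    exact absurd j.2 (by omega)
  rw [this, mul_zero]

lemma tendsto_partial_sums (hm : ∀ n : ℤ, N₀ < n → m n = 0)
    (hconv : ∀ s : ℝ, 0 < s → Summable fun n : ℤ => ∑ j, ‖α n j‖ ^ s)
    (v : ℕ) (hv : 1 ≤ v) :
    Tendsto (fun N : ℕ => ∑ n ∈ Finset.Icc (N₀ - (N:ℤ)) N₀, (-1 : ℂ) ^ n * ∑ j, α n j ^ v)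
      atTop (nhds (∑' n : ℤ, (-1 : ℂ) ^ n * ∑ j, α n j ^ v)) := by
  have h1 := (summ2 m α hconv v hv).hasSum.comp (hIccTendsto N₀)
  exact h1.congr fun N => sum_trunc N₀ m α hm v N

end final

/-- Given finitely many complex numbers `α_{n,j}` for each `n ≤ N₀` with
`∑_{n,j} |α_{n,j}|^s < ∞` for all real `s > 0`:
(1) for each `v ≥ 1` the series `c_v = ∑_n (-1)^n ∑_j α_{n,j}^v` converges absolutely;
(2) with `P_n(t) = ∏_j (1 - α_{n,j} t)`, the infinite product
`∏_{n ≤ N₀} P_n(t)^{(-1)^{n+1}}` (partial products over `N₀ - N ≤ n ≤ N₀`) converges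
term by term in `ℂ[[t]]` to `exp (∑_{v ≥ 1} c_v t^v / v)`. -/
theorem infinite_product_L_series (N₀ : ℤ) (m : ℤ → ℕ) (hm : ∀ n : ℤ, N₀ < n → m n = 0)
    (α : (n : ℤ) → Fin (m n) → ℂ)
    (hconv : ∀ s : ℝ, 0 < s → Summable fun n : ℤ => ∑ j, ‖α n j‖ ^ s) :
    (∀ v : ℕ, 1 ≤ v → Summable fun n : ℤ => ‖∑ j, α n j ^ v‖) ∧
    (∀ k : ℕ,
      Tendsto
        (fun N : ℕ => PowerSeries.coeff k
          (∏ n ∈ Finset.Icc (N₀ - N) N₀,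
            if Even n then (∏ j, (1 - PowerSeries.C (α n j) * PowerSeries.X))⁻¹
            else ∏ j, (1 - PowerSeries.C (α n j) * PowerSeries.X)))
        atTop
        (nhds (PowerSeries.coeff k (pexp (PowerSeries.mk fun v =>
          if v = 0 then 0
          else (∑' n : ℤ, (-1 : ℂ) ^ n * ∑ j, α n j ^ v) / v))))) := by
  constructor
  · exact fun v hv => part1 m α hconv v hv
  · intro k
    have hGv : ∀ v : ℕ, Tendsto
        (fun N : ℕ => if v = 0 then (0:ℂ)
          else (∑ n ∈ Finset.Icc (N₀ - (N:ℤ)) N₀, (-1:ℂ)^n * ∑ j, α n j ^ v) / v)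
        atTop
        (nhds (if v = 0 then (0:ℂ)
          else (∑' n : ℤ, (-1:ℂ)^n * ∑ j, α n j ^ v) / v)) := by
      intro v
      rcases Nat.eq_zero_or_pos v with rfl | hv
      · simpa using tendsto_const_nhds
      · simp only [if_neg hv.ne']
        exact (tendsto_partial_sums N₀ m α hm hconv v hv).div_const _
    have h2 := tendsto_coeff_pexp
      (fun N v => if v = 0 then (0:ℂ)
        else (∑ n ∈ Finset.Icc (N₀ - (N:ℤ)) N₀, (-1:ℂ)^n * ∑ j, α n j ^ v) / v)
      (fun v => if v = 0 then (0:ℂ)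
        else (∑' n : ℤ, (-1:ℂ)^n * ∑ j, α n j ^ v) / v) hGv k
    apply h2.congr
    intro N
    exact (congrArg (PowerSeries.coeff k) (prod_eq m α (Finset.Icc (N₀ - (N:ℤ)) N₀))).symm
end

section
/- Let q be a prime power and let f(t) = ∑_{k≥0} a_k t^k ∈ ℝ[[t]] be the term-by-term limit of the infinite product ∏_{n≥1} (1 − q^{−n} t)^{−1}. Then (1 − t) · f(qt) = f(t) in ℝ[[t]], where f(qt) denotes the rescaled series ∑_{k≥0} a_k q^k t^k. -/
open Filter

namespace ZetaBGmAux

noncomputable def u (q : ℝ) (n : ℕ) : PowerSeries ℝ :=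
  1 - PowerSeries.C ((q ^ n)⁻¹) * PowerSeries.X

noncomputable def P (q : ℝ) (N : ℕ) : PowerSeries ℝ :=
  ∏ n ∈ Finset.Icc 1 N, (u q n)⁻¹

lemma constCoeff_u (q : ℝ) (n : ℕ) :
    PowerSeries.constantCoeff (u q n) = 1 := by
  simp [u]

lemma rescale_u (q : ℝ) (hq : q ≠ 0) (n : ℕ) :
    PowerSeries.rescale q (u q (n + 1)) = u q n := by
  simp only [u, map_sub, map_one, map_mul, PowerSeries.rescale_X]
  have : PowerSeries.rescale q (PowerSeries.C ((q ^ (n + 1))⁻¹))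
      = PowerSeries.C ((q ^ (n + 1))⁻¹) := by
    ext k
    cases k <;> simp [PowerSeries.coeff_rescale, PowerSeries.coeff_C]
  rw [this, ← mul_assoc, ← map_mul]
  congr 2
  rw [pow_succ, mul_inv, mul_assoc, inv_mul_cancel₀ hq, mul_one]

lemma rescale_u_inv (q : ℝ) (hq : q ≠ 0) (n : ℕ) :
    PowerSeries.rescale q ((u q (n + 1))⁻¹) = (u q n)⁻¹ := by
  rw [PowerSeries.eq_inv_iff_mul_eq_one (by rw [constCoeff_u]; norm_num)]
  rw [← rescale_u q hq n, ← map_mul]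
  rw [PowerSeries.inv_mul_cancel _ (by rw [constCoeff_u]; norm_num)]
  exact map_one _

lemma rescale_P (q : ℝ) (hq : q ≠ 0) (N : ℕ) :
    PowerSeries.rescale q (P q (N + 1)) = (u q 0)⁻¹ * P q N := by
  induction N with
  | zero =>
    simp [P, rescale_u_inv q hq 0]
  | succ N ih =>
    have h2 : P q (N + 2) = P q (N + 1) * (u q (N + 2))⁻¹ := by
      simp only [P]; rw [Finset.prod_Icc_succ_top (by omega)]
    have h3 : P q (N + 1) = P q N * (u q (N + 1))⁻¹ := by
      simp only [P]; rw [Finset.prod_Icc_succ_top (by omega)]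
    rw [h2, map_mul, ih, rescale_u_inv q hq, mul_assoc, ← h3]

lemma key (q : ℝ) (hq : q ≠ 0) (N : ℕ) :
    (1 - PowerSeries.X) * PowerSeries.rescale q (P q (N + 1)) = P q N := by
  rw [rescale_P q hq, ← mul_assoc]
  have h0 : (1 - PowerSeries.X : PowerSeries ℝ) = u q 0 := by simp [u]
  rw [h0, PowerSeries.mul_inv_cancel _ (by rw [constCoeff_u]; norm_num), one_mul]

end ZetaBGmAux

/-- Let `q` be a prime power and let `f ∈ ℝ[[t]]` be the term-by-term limit of the
infinite product `∏_{n ≥ 1} (1 - q^{-n} t)⁻¹`, i.e. the zeta function `Z(B𝔾ₘ, t)`.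
Then it satisfies the functional equation `(1 - t) · f(qt) = f(t)`. -/
theorem zeta_BGm_functional_equation (q : ℕ) (hq : IsPrimePow q) (f : PowerSeries ℝ)
    (hf : ∀ k : ℕ,
      Tendsto
        (fun N : ℕ => PowerSeries.coeff k
          (∏ n ∈ Finset.Icc 1 N,
            (1 - PowerSeries.C (((q : ℝ) ^ n)⁻¹) * PowerSeries.X)⁻¹))
        atTop (nhds (PowerSeries.coeff k f))) :
    (1 - PowerSeries.X) * PowerSeries.rescale (q : ℝ) f = f := by
  have hq0 : (q : ℝ) ≠ 0 := by
    have := hq.pos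
    positivity
  have hf' : ∀ k : ℕ,
      Tendsto (fun N : ℕ => PowerSeries.coeff k (ZetaBGmAux.P (q : ℝ) N))
        atTop (nhds (PowerSeries.coeff k f)) := by
    intro k
    exact hf k
  ext k
  -- coefficient of LHS
  have coeffLHS : ∀ g : PowerSeries ℝ, ∀ k : ℕ,
      PowerSeries.coeff k ((1 - PowerSeries.X) * PowerSeries.rescale (q : ℝ) g)
        = (q : ℝ) ^ k * PowerSeries.coeff k g
          - (if k = 0 then 0 else (q : ℝ) ^ (k - 1) * PowerSeries.coeff (k - 1) g) := by
    intro g k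
    rw [sub_mul, one_mul, map_sub, PowerSeries.coeff_rescale]
    congr 1
    cases k with
    | zero => simp
    | succ k => simp [PowerSeries.coeff_succ_X_mul, PowerSeries.coeff_rescale]
  have hN : ∀ N : ℕ,
      (q : ℝ) ^ k * PowerSeries.coeff k (ZetaBGmAux.P (q : ℝ) (N + 1))
        - (if k = 0 then 0 else
            (q : ℝ) ^ (k - 1) * PowerSeries.coeff (k - 1) (ZetaBGmAux.P (q : ℝ) (N + 1)))
        = PowerSeries.coeff k (ZetaBGmAux.P (q : ℝ) N) := by
    intro N
    rw [← coeffLHS, ZetaBGmAux.key _ hq0]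
  have hL : Tendsto
      (fun N : ℕ => (q : ℝ) ^ k * PowerSeries.coeff k (ZetaBGmAux.P (q : ℝ) (N + 1))
        - (if k = 0 then 0 else
            (q : ℝ) ^ (k - 1) * PowerSeries.coeff (k - 1) (ZetaBGmAux.P (q : ℝ) (N + 1))))
      atTop (nhds ((q : ℝ) ^ k * PowerSeries.coeff k f
        - (if k = 0 then 0 else (q : ℝ) ^ (k - 1) * PowerSeries.coeff (k - 1) f))) := by
    apply Tendsto.sub
    · exact (((hf' k).comp (tendsto_add_atTop_nat 1)).const_mul _)
    · split
      · exact tendsto_const_nhds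
      · exact (((hf' (k - 1)).comp (tendsto_add_atTop_nat 1)).const_mul _)
  have hR : Tendsto
      (fun N : ℕ => PowerSeries.coeff k (ZetaBGmAux.P (q : ℝ) N))
      atTop (nhds (PowerSeries.coeff k f)) := hf' k
  have heq := tendsto_nhds_unique (hL.congr fun N => hN N) hR
  rw [coeffLHS f k, heq]
end
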